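/- arXiv:2106.08466 — 3 statements merged into one kernel-verified Lean document; each statement's English description precedes it below -/
import Mathlib

section
/- The system of Volterra integral equations S̄(t) = S̄(0) - λ∫₀ᵗ S̄(s) Ī(s) ds and Ī(t) = Ī(0) F₀^c(t) + λ∫₀ᵗ F^c(t-s) S̄(s) Ī(s) ds has a unique solution (S̄, Ī) with values in [0,1]² on [0, ∞), where F₀^c and F^c are survival functions (nonincreasing, right-continuous, taking values in [0,1], equal to 1 at 0⁻ limits bounded by 1). -/
open MeasureTheory Set

namespace VolterraSIR

noncomputable def cl (x : ℝ) : ℝ := max 0 (min 1 x)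

lemma cl_nonneg (x : ℝ) : 0 ≤ cl x := le_max_left _ _
lemma cl_le_one (x : ℝ) : cl x ≤ 1 := max_le zero_le_one (min_le_left _ _)
lemma cl_eq {x : ℝ} (h : x ∈ Icc (0:ℝ) 1) : cl x = x := by
  simp [cl, min_eq_right h.2, max_eq_right h.1]
lemma cl_continuous : Continuous cl := by
  unfold cl; fun_prop
lemma cl_measurable : Measurable cl := cl_continuous.measurable
lemma abs_cl_sub_cl (x y : ℝ) : |cl x - cl y| ≤ |x - y| := by
  have h1 : |cl x - cl y| ≤ max |(0:ℝ) - 0| |min 1 x - min 1 y| :=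
    abs_max_sub_max_le_max _ _ _ _
  have h2 : |min 1 x - min 1 y| ≤ max |(1:ℝ) - 1| |x - y| := abs_min_sub_min_le_max _ _ _ _
  simp only [sub_self, abs_zero] at h1 h2
  calc |cl x - cl y| ≤ max 0 |min 1 x - min 1 y| := h1
    _ = |min 1 x - min 1 y| := max_eq_right (abs_nonneg _)
    _ ≤ max 0 |x - y| := h2
    _ = |x - y| := max_eq_right (abs_nonneg _)

noncomputable def gg (p : ℝ × ℝ) : ℝ := cl p.1 * cl p.2

lemma gg_nonneg (p : ℝ × ℝ) : 0 ≤ gg p := mul_nonneg (cl_nonneg _) (cl_nonneg _)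
lemma gg_le_one (p : ℝ × ℝ) : gg p ≤ 1 :=
  mul_le_one₀ (cl_le_one _) (cl_nonneg _) (cl_le_one _)
lemma gg_abs_le_one (p : ℝ × ℝ) : |gg p| ≤ 1 := abs_le.2 ⟨by linarith [gg_nonneg p], gg_le_one p⟩
lemma gg_continuous : Continuous gg := by
  unfold gg; exact (cl_continuous.comp continuous_fst).mul (cl_continuous.comp continuous_snd)
lemma gg_measurable : Measurable gg := gg_continuous.measurable

lemma gg_lipschitz (p q : ℝ × ℝ) : |gg p - gg q| ≤ |p.1 - q.1| + |p.2 - q.2| := by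
  have : gg p - gg q = cl p.1 * (cl p.2 - cl q.2) + cl q.2 * (cl p.1 - cl q.1) := by
    unfold gg; ring
  rw [this]
  calc |cl p.1 * (cl p.2 - cl q.2) + cl q.2 * (cl p.1 - cl q.1)|
      ≤ |cl p.1 * (cl p.2 - cl q.2)| + |cl q.2 * (cl p.1 - cl q.1)| := abs_add_le _ _
    _ = |cl p.1| * |cl p.2 - cl q.2| + |cl q.2| * |cl p.1 - cl q.1| := by
        rw [abs_mul, abs_mul]
    _ ≤ 1 * |p.2 - q.2| + 1 * |p.1 - q.1| := by
        have h1 : |cl p.1| * |cl p.2 - cl q.2| ≤ 1 * |p.2 - q.2| :=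
          mul_le_mul (abs_le.2 ⟨by linarith [cl_nonneg p.1], cl_le_one _⟩)
            (abs_cl_sub_cl _ _) (abs_nonneg _) zero_le_one
        have h2 : |cl q.2| * |cl p.1 - cl q.1| ≤ 1 * |p.1 - q.1| :=
          mul_le_mul (abs_le.2 ⟨by linarith [cl_nonneg q.2], cl_le_one _⟩)
            (abs_cl_sub_cl _ _) (abs_nonneg _) zero_le_one
        linarith
    _ = |p.1 - q.1| + |p.2 - q.2| := by ring

/-- measurability of a parametric set integral -/
lemma measurable_param_integral (H : ℝ → ℝ → ℝ)
    (hH : Measurable fun p : ℝ × ℝ => H p.1 p.2) :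
    Measurable fun t => ∫ s in Ioc (0:ℝ) t, H t s := by
  have h1 : ∀ t, ∫ s in Ioc (0:ℝ) t, H t s = ∫ s, (Ioc (0:ℝ) t).indicator (H t) s :=
    fun t => (integral_indicator measurableSet_Ioc).symm
  simp only [h1]
  have hm : Measurable fun p : ℝ × ℝ => (Ioc (0:ℝ) p.1).indicator (H p.1) p.2 := by
    have : (fun p : ℝ × ℝ => (Ioc (0:ℝ) p.1).indicator (H p.1) p.2)
        = fun p : ℝ × ℝ => ({q : ℝ × ℝ | q.2 ∈ Ioc (0:ℝ) q.1}.indicator (fun q => H q.1 q.2)) p := by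
      funext p
      by_cases h : p.2 ∈ Ioc (0:ℝ) p.1
      · simp only [Set.indicator_of_mem h]
        rw [Set.indicator_of_mem]; exact h
      · simp only [Set.indicator_of_notMem h]
        rw [Set.indicator_of_notMem]; exact h
    rw [this]
    refine hH.indicator ?_
    have : {q : ℝ × ℝ | q.2 ∈ Ioc (0:ℝ) q.1} = {q : ℝ × ℝ | 0 < q.2} ∩ {q : ℝ × ℝ | q.2 ≤ q.1} := by
      ext q; simp [Set.mem_Ioc, and_comm]
    rw [this]
    exact (measurableSet_lt measurable_const measurable_snd).inter
      (measurableSet_le measurable_snd measurable_fst)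
  exact (hm.stronglyMeasurable.integral_prod_right').measurable

lemma integrableOn_of_bdd' {h : ℝ → ℝ} (hm : Measurable h) {a t B : ℝ}
    (hb : ∀ s ∈ Ioc a t, |h s| ≤ B) : IntegrableOn h (Ioc a t) := by
  refine Measure.integrableOn_of_bounded (M := B) (by simp) hm.aestronglyMeasurable ?_
  filter_upwards [ae_restrict_mem measurableSet_Ioc] with s hs
  simpa [Real.norm_eq_abs] using hb s hs

lemma integrableOn_of_bdd {h : ℝ → ℝ} (hm : Measurable h) {t B : ℝ}
    (hb : ∀ s ∈ Ioc (0:ℝ) t, |h s| ≤ B) : IntegrableOn h (Ioc 0 t) :=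
  integrableOn_of_bdd' hm hb

/-- |∫ h| ≤ ∫ bound, for measurable h with pointwise bound on the set. -/
lemma abs_setIntegral_le {h b : ℝ → ℝ} (hm : Measurable h) (hbm : Measurable b) {t : ℝ}
    (hB : ∀ s ∈ Ioc (0:ℝ) t, |h s| ≤ b s) {B : ℝ} (hbB : ∀ s ∈ Ioc (0:ℝ) t, b s ≤ B) :
    |∫ s in Ioc (0:ℝ) t, h s| ≤ ∫ s in Ioc (0:ℝ) t, b s := by
  have hbint : IntegrableOn b (Ioc 0 t) :=
    integrableOn_of_bdd hbm (fun s hs => abs_le.2 ⟨by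
      have := (abs_nonneg (h s)).trans (hB s hs); linarith [hbB s hs], hbB s hs⟩)
  have hint : IntegrableOn h (Ioc 0 t) :=
    integrableOn_of_bdd hm (fun s hs => (hB s hs).trans (hbB s hs))
  calc |∫ s in Ioc (0:ℝ) t, h s| ≤ ∫ s in Ioc (0:ℝ) t, |h s| := by
        simpa [Real.norm_eq_abs] using norm_integral_le_integral_norm (μ := volume.restrict (Ioc 0 t)) h
    _ ≤ ∫ s in Ioc (0:ℝ) t, b s :=
        setIntegral_mono_on hint.abs hbint measurableSet_Ioc hB

lemma integral_pow_Ioc (n : ℕ) {t : ℝ} (ht : 0 ≤ t) :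
    ∫ s in Ioc (0:ℝ) t, s ^ n = t ^ (n+1) / (n+1) := by
  rw [← intervalIntegral.integral_of_le ht, integral_pow]
  simp

/-- one Picard / Gronwall step -/
lemma picard_step {K C : ℝ} (hK : 0 ≤ K) (hC : 0 ≤ C) {g : ℝ → ℝ} (hg : Measurable g) (n : ℕ)
    (hgnn : ∀ s, 0 ≤ s → 0 ≤ g s) (hgb : ∀ s, 0 ≤ s → g s ≤ C * (K*s)^n / n.factorial) :
    ∀ t, 0 ≤ t → K * ∫ s in Ioc (0:ℝ) t, g s ≤ C * (K*t)^(n+1) / (n+1).factorial := by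
  intro t ht
  have hb : ∀ s ∈ Ioc (0:ℝ) t, g s ≤ C * K^n / n.factorial * s^n := by
    intro s hs
    have := hgb s hs.1.le
    calc g s ≤ C * (K*s)^n / n.factorial := this
      _ = C * K^n / n.factorial * s^n := by rw [mul_pow]; ring
  have hgint : IntegrableOn g (Ioc 0 t) := by
    refine integrableOn_of_bdd hg (B := C * K^n / n.factorial * t^n) ?_
    intro s hs
    rw [abs_of_nonneg (hgnn s hs.1.le)]
    refine (hb s hs).trans ?_
    have hsn : s ^ n ≤ t ^ n := pow_le_pow_left₀ hs.1.le hs.2 n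
    have : (0:ℝ) ≤ C * K^n / n.factorial := by positivity
    exact mul_le_mul_of_nonneg_left hsn this
  have hbint : IntegrableOn (fun s => C * K^n / n.factorial * s^n) (Ioc 0 t) := by
    refine integrableOn_of_bdd (by fun_prop) (B := C * K^n / n.factorial * t^n) ?_
    intro s hs
    have hs1 : 0 < s := hs.1
    rw [abs_of_nonneg (by positivity)]
    have hsn : s ^ n ≤ t ^ n := pow_le_pow_left₀ hs.1.le hs.2 n
    exact mul_le_mul_of_nonneg_left hsn (by positivity)
  have hmono : ∫ s in Ioc (0:ℝ) t, g s ≤ ∫ s in Ioc (0:ℝ) t, C * K^n / n.factorial * s^n :=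
    setIntegral_mono_on hgint hbint measurableSet_Ioc hb
  have hval : ∫ s in Ioc (0:ℝ) t, C * K^n / n.factorial * s^n
      = C * K^n / n.factorial * (t^(n+1)/(n+1)) := by
    rw [integral_const_mul, integral_pow_Ioc n ht]
  calc K * ∫ s in Ioc (0:ℝ) t, g s ≤ K * (C * K^n / n.factorial * (t^(n+1)/(n+1))) := by
        rw [← hval]; exact mul_le_mul_of_nonneg_left hmono hK
    _ = C * (K*t)^(n+1) / (n+1).factorial := by
        rw [mul_pow, Nat.factorial_succ]
        push_cast
        field_simp
        ring

lemma gronwall_zero {K C : ℝ} (hK : 0 ≤ K) (hC : 0 ≤ C) {f : ℝ → ℝ} (hf : Measurable f)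
    (hnn : ∀ t, 0 ≤ t → 0 ≤ f t) (hb : ∀ t, 0 ≤ t → f t ≤ C)
    (hrec : ∀ t, 0 ≤ t → f t ≤ K * ∫ s in Ioc (0:ℝ) t, f s) :
    ∀ t, 0 ≤ t → f t = 0 := by
  have key : ∀ n, ∀ t, 0 ≤ t → f t ≤ C * (K*t)^n / n.factorial := by
    intro n
    induction n with
    | zero => intro t ht; simpa using hb t ht
    | succ n ih =>
      intro t ht
      exact (hrec t ht).trans (picard_step hK hC hf n hnn ih t ht)
  intro t ht
  have hlim : Filter.Tendsto (fun n => C * (K*t)^n / n.factorial) Filter.atTop (nhds 0) := by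
    have := (Real.summable_pow_div_factorial (K*t)).tendsto_atTop_zero
    have h2 := this.const_mul C
    simpa [mul_div_assoc] using h2
  have h1 : f t ≤ 0 := le_of_tendsto_of_tendsto' tendsto_const_nhds hlim (fun n => key n t ht)
  linarith [hnn t ht]

section Picard

variable (lam : ℝ) (F0c Fc : ℝ → ℝ) (S0 I0 : ℝ)

noncomputable def Pic : ℕ → ℝ → ℝ × ℝ
  | 0 => fun t => (S0, I0 * F0c t)
  | n+1 => fun t =>
      (S0 - lam * ∫ s in Ioc (0:ℝ) t, gg (Pic n s),
       I0 * F0c t + lam * ∫ s in Ioc (0:ℝ) t, Fc (t - s) * gg (Pic n s))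

lemma Pic_measurable (hF0c : Measurable F0c) (hFc : Measurable Fc) :
    ∀ n, Measurable (Pic lam F0c Fc S0 I0 n) := by
  intro n
  induction n with
  | zero =>
    exact measurable_const.prodMk (measurable_const.mul hF0c)
  | succ n ih =>
    show Measurable fun t => ((S0 - lam * ∫ s in Ioc (0:ℝ) t, gg (Pic lam F0c Fc S0 I0 n s),
       I0 * F0c t + lam * ∫ s in Ioc (0:ℝ) t, Fc (t - s) * gg (Pic lam F0c Fc S0 I0 n s)) : ℝ × ℝ)
    have h1 : Measurable fun t => ∫ s in Ioc (0:ℝ) t, gg (Pic lam F0c Fc S0 I0 n s) :=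
      measurable_param_integral _ ((gg_measurable.comp (ih.comp measurable_snd)))
    have h2 : Measurable fun t => ∫ s in Ioc (0:ℝ) t, Fc (t - s) * gg (Pic lam F0c Fc S0 I0 n s) :=
      measurable_param_integral _
        ((hFc.comp (measurable_fst.sub measurable_snd)).mul
          (gg_measurable.comp (ih.comp measurable_snd)))
    exact (measurable_const.sub (h1.const_mul lam)).prodMk
      ((measurable_const.mul hF0c).add (h2.const_mul lam))

lemma volume_Ioc_toReal {t : ℝ} (ht : 0 ≤ t) : (MeasureTheory.volume (Ioc (0:ℝ) t)).toReal = t := by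
  rw [Real.volume_Ioc, ENNReal.toReal_ofReal (by linarith)]; ring

lemma integral_one_Ioc {t : ℝ} (ht : 0 ≤ t) : ∫ _ in Ioc (0:ℝ) t, (1:ℝ) = t := by
  rw [setIntegral_const, smul_eq_mul, measureReal_def, volume_Ioc_toReal ht, mul_one]

lemma Pic_diff_le (hlam : 0 ≤ lam) (hF0c : Measurable F0c) (hFc : Measurable Fc)
    (hFc_mem : ∀ u, 0 ≤ u → Fc u ∈ Icc (0:ℝ) 1) :
    ∀ n, ∀ t, 0 ≤ t →
      |(Pic lam F0c Fc S0 I0 (n+1) t).1 - (Pic lam F0c Fc S0 I0 n t).1|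
      + |(Pic lam F0c Fc S0 I0 (n+1) t).2 - (Pic lam F0c Fc S0 I0 n t).2|
      ≤ (2*lam*t)^(n+1)/(n+1).factorial := by
  set P := Pic lam F0c Fc S0 I0 with hP
  have hPm : ∀ n, Measurable (P n) := Pic_measurable lam F0c Fc S0 I0 hF0c hFc
  have hFcb : ∀ t, 0 ≤ t → ∀ s ∈ Ioc (0:ℝ) t, |Fc (t - s)| ≤ 1 := by
    intro t ht s hs
    have h0 : (0:ℝ) ≤ t - s := by linarith [hs.2]
    have := hFc_mem (t - s) h0
    rw [abs_le]; constructor <;> linarith [this.1, this.2]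
  intro n
  induction n with
  | zero =>
    intro t ht
    have e1 : (P 1 t).1 - (P 0 t).1 = -(lam * ∫ s in Ioc (0:ℝ) t, gg (P 0 s)) := by
      simp [hP, Pic]
    have e2 : (P 1 t).2 - (P 0 t).2 = lam * ∫ s in Ioc (0:ℝ) t, Fc (t - s) * gg (P 0 s) := by
      simp [hP, Pic]
    have b1 : |∫ s in Ioc (0:ℝ) t, gg (P 0 s)| ≤ ∫ _ in Ioc (0:ℝ) t, (1:ℝ) := by
      refine abs_setIntegral_le (gg_measurable.comp (hPm 0)) measurable_const
        (fun s _ => gg_abs_le_one _) (B := 1) (fun s _ => le_rfl)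
    have b2 : |∫ s in Ioc (0:ℝ) t, Fc (t - s) * gg (P 0 s)| ≤ ∫ _ in Ioc (0:ℝ) t, (1:ℝ) := by
      refine abs_setIntegral_le ((hFc.comp (measurable_const.sub measurable_id)).mul
        (gg_measurable.comp (hPm 0))) measurable_const ?_ (B := 1) (fun s _ => le_rfl)
      intro s hs
      show |Fc (t - s) * gg (P 0 s)| ≤ 1
      rw [abs_mul]
      exact mul_le_one₀ (hFcb t ht s hs) (abs_nonneg _) (gg_abs_le_one _)
    rw [integral_one_Ioc ht] at b1 b2
    rw [e1, e2, abs_neg, abs_mul, abs_mul, abs_of_nonneg hlam]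
    have : (2*lam*t)^(0+1)/(0+1).factorial = 2*lam*t := by norm_num
    rw [this]
    nlinarith [mul_le_mul_of_nonneg_left b1 hlam, mul_le_mul_of_nonneg_left b2 hlam]
  | succ n ih =>
    intro t ht
    set δ : ℝ → ℝ := fun s =>
      |(P (n+1) s).1 - (P n s).1| + |(P (n+1) s).2 - (P n s).2| with hδ
    have hδm : Measurable δ := by
      apply Measurable.add
      · exact ((measurable_fst.comp (hPm (n+1))).sub (measurable_fst.comp (hPm n))).abs
      · exact ((measurable_snd.comp (hPm (n+1))).sub (measurable_snd.comp (hPm n))).abs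
    have hδnn : ∀ s, 0 ≤ δ s := fun s => add_nonneg (abs_nonneg _) (abs_nonneg _)
    have hδb : ∀ s, 0 ≤ s → δ s ≤ 1 * (2*lam*s)^(n+1)/(n+1).factorial := by
      intro s hs; rw [one_mul]; exact ih s hs
    have hggd : ∀ s, |gg (P (n+1) s) - gg (P n s)| ≤ δ s := fun s => gg_lipschitz _ _
    have hint : ∀ m, IntegrableOn (fun s => gg (P m s)) (Ioc 0 t) := fun m =>
      integrableOn_of_bdd (gg_measurable.comp (hPm m)) (fun s _ => gg_abs_le_one _)
    have hintF : ∀ m, IntegrableOn (fun s => Fc (t - s) * gg (P m s)) (Ioc 0 t) := by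
      intro m
      refine integrableOn_of_bdd ((hFc.comp (measurable_const.sub measurable_id)).mul
        (gg_measurable.comp (hPm m))) (B := 1) ?_
      intro s hs
      show |Fc (t - s) * gg (P m s)| ≤ 1
      rw [abs_mul]
      exact mul_le_one₀ (hFcb t ht s hs) (abs_nonneg _) (gg_abs_le_one _)
    have hδB : ∀ s ∈ Ioc (0:ℝ) t, δ s ≤ (2*lam*t)^(n+1)/(n+1).factorial := by
      intro s hs
      refine (ih s hs.1.le).trans ?_
      have h1 : (2*lam*s)^(n+1) ≤ (2*lam*t)^(n+1) :=
        pow_le_pow_left₀ (mul_nonneg (by linarith) hs.1.le) (by nlinarith [hs.2]) _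
      exact div_le_div_of_nonneg_right h1 (by positivity) |>.trans le_rfl
    have e1 : (P (n+2) t).1 - (P (n+1) t).1
        = -(lam * ∫ s in Ioc (0:ℝ) t, (gg (P (n+1) s) - gg (P n s))) := by
      have : (∫ s in Ioc (0:ℝ) t, (gg (P (n+1) s) - gg (P n s)))
          = (∫ s in Ioc (0:ℝ) t, gg (P (n+1) s)) - ∫ s in Ioc (0:ℝ) t, gg (P n s) :=
        integral_sub (hint (n+1)) (hint n)
      rw [this]
      show (S0 - lam * ∫ s in Ioc (0:ℝ) t, gg (P (n+1) s))
          - (S0 - lam * ∫ s in Ioc (0:ℝ) t, gg (P n s)) = _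
      ring
    have e2 : (P (n+2) t).2 - (P (n+1) t).2
        = lam * ∫ s in Ioc (0:ℝ) t, Fc (t - s) * (gg (P (n+1) s) - gg (P n s)) := by
      have heq : ∀ s, Fc (t - s) * (gg (P (n+1) s) - gg (P n s))
          = Fc (t - s) * gg (P (n+1) s) - Fc (t - s) * gg (P n s) := fun s => by ring
      simp_rw [heq]
      rw [integral_sub (hintF (n+1)) (hintF n)]
      show (I0 * F0c t + lam * ∫ s in Ioc (0:ℝ) t, Fc (t - s) * gg (P (n+1) s))
          - (I0 * F0c t + lam * ∫ s in Ioc (0:ℝ) t, Fc (t - s) * gg (P n s)) = _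
      ring
    have b1 : |∫ s in Ioc (0:ℝ) t, (gg (P (n+1) s) - gg (P n s))| ≤ ∫ s in Ioc (0:ℝ) t, δ s :=
      abs_setIntegral_le ((gg_measurable.comp (hPm (n+1))).sub (gg_measurable.comp (hPm n)))
        hδm (fun s _ => hggd s) hδB
    have b2 : |∫ s in Ioc (0:ℝ) t, Fc (t - s) * (gg (P (n+1) s) - gg (P n s))|
        ≤ ∫ s in Ioc (0:ℝ) t, δ s := by
      refine abs_setIntegral_le ((hFc.comp (measurable_const.sub measurable_id)).mul
        ((gg_measurable.comp (hPm (n+1))).sub (gg_measurable.comp (hPm n)))) hδm ?_ hδB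
      intro s hs
      show |Fc (t - s) * (gg (P (n+1) s) - gg (P n s))| ≤ δ s
      rw [abs_mul]
      calc |Fc (t - s)| * |gg (P (n+1) s) - gg (P n s)| ≤ 1 * δ s :=
            mul_le_mul (hFcb t ht s hs) (hggd s) (abs_nonneg _) zero_le_one
        _ = δ s := one_mul _
    have hstep := picard_step (K := 2*lam) (C := 1) (by positivity) zero_le_one hδm (n+1)
      (fun s _ => hδnn s) hδb t ht
    rw [one_mul] at hstep
    have hfin : lam * (∫ s in Ioc (0:ℝ) t, δ s) + lam * (∫ s in Ioc (0:ℝ) t, δ s)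
        ≤ (2*lam*t)^(n+1+1)/(n+1+1).factorial := by
      calc lam * (∫ s in Ioc (0:ℝ) t, δ s) + lam * (∫ s in Ioc (0:ℝ) t, δ s)
          = (2*lam) * ∫ s in Ioc (0:ℝ) t, δ s := by ring
        _ ≤ (2*lam*t)^(n+1+1)/(n+1+1).factorial := hstep
    rw [e1, e2, abs_neg, abs_mul, abs_mul, abs_of_nonneg hlam]
    have h1 := mul_le_mul_of_nonneg_left b1 hlam
    have h2 := mul_le_mul_of_nonneg_left b2 hlam
    calc lam * |∫ s in Ioc (0:ℝ) t, (gg (P (n+1) s) - gg (P n s))|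
        + lam * |∫ s in Ioc (0:ℝ) t, Fc (t - s) * (gg (P (n+1) s) - gg (P n s))|
        ≤ lam * (∫ s in Ioc (0:ℝ) t, δ s) + lam * (∫ s in Ioc (0:ℝ) t, δ s) := by
          exact add_le_add h1 h2
      _ ≤ (2*lam*t)^(n+1+1)/(n+1+1).factorial := hfin

lemma Pic_neg {t : ℝ} (ht : t < 0) : ∀ n, Pic lam F0c Fc S0 I0 n t = (S0, I0 * F0c t) := by
  have hemp : Ioc (0:ℝ) t = ∅ := Ioc_eq_empty (by linarith)
  intro n
  cases n with
  | zero => rfl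
  | succ n => show (_, _) = _; rw [hemp]; simp

lemma Pic_cauchy (hlam : 0 ≤ lam) (hF0c : Measurable F0c) (hFc : Measurable Fc)
    (hFc_mem : ∀ u, 0 ≤ u → Fc u ∈ Icc (0:ℝ) 1) (t : ℝ) :
    CauchySeq (fun n => Pic lam F0c Fc S0 I0 n t) := by
  rcases lt_or_ge t 0 with ht | ht
  · have : (fun n => Pic lam F0c Fc S0 I0 n t) = fun _ => ((S0, I0 * F0c t) : ℝ × ℝ) :=
      funext (Pic_neg lam F0c Fc S0 I0 ht)
    rw [this]; exact cauchySeq_const _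
  · apply cauchySeq_of_dist_le_of_summable (fun n => (2*lam*t)^(n+1)/(n+1).factorial)
    · intro n
      have hd := Pic_diff_le lam F0c Fc S0 I0 hlam hF0c hFc hFc_mem n t ht
      rw [Prod.dist_eq, Real.dist_eq, Real.dist_eq]
      apply max_le
      · rw [abs_sub_comm]; linarith [abs_nonneg ((Pic lam F0c Fc S0 I0 (n+1) t).2 - (Pic lam F0c Fc S0 I0 n t).2)]
      · rw [abs_sub_comm]; linarith [abs_nonneg ((Pic lam F0c Fc S0 I0 (n+1) t).1 - (Pic lam F0c Fc S0 I0 n t).1)]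
    · have := Real.summable_pow_div_factorial (2*lam*t)
      exact (summable_nat_add_iff 1).2 this

noncomputable def XX : ℝ → ℝ × ℝ := fun t =>
  Filter.limUnder Filter.atTop (fun n => Pic lam F0c Fc S0 I0 n t)

lemma Pic_tendsto (hlam : 0 ≤ lam) (hF0c : Measurable F0c) (hFc : Measurable Fc)
    (hFc_mem : ∀ u, 0 ≤ u → Fc u ∈ Icc (0:ℝ) 1) (t : ℝ) :
    Filter.Tendsto (fun n => Pic lam F0c Fc S0 I0 n t) Filter.atTop
      (nhds (XX lam F0c Fc S0 I0 t)) :=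
  (Pic_cauchy lam F0c Fc S0 I0 hlam hF0c hFc hFc_mem t).tendsto_limUnder

lemma XX_measurable (hlam : 0 ≤ lam) (hF0c : Measurable F0c) (hFc : Measurable Fc)
    (hFc_mem : ∀ u, 0 ≤ u → Fc u ∈ Icc (0:ℝ) 1) :
    Measurable (XX lam F0c Fc S0 I0) :=
  measurable_of_tendsto_metrizable (Pic_measurable lam F0c Fc S0 I0 hF0c hFc)
    (tendsto_pi_nhds.2 (Pic_tendsto lam F0c Fc S0 I0 hlam hF0c hFc hFc_mem))

lemma XX_eq (hlam : 0 ≤ lam) (hF0c : Measurable F0c) (hFc : Measurable Fc)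
    (hFc_mem : ∀ u, 0 ≤ u → Fc u ∈ Icc (0:ℝ) 1) (t : ℝ) (ht : 0 ≤ t) :
    XX lam F0c Fc S0 I0 t
      = (S0 - lam * ∫ s in Ioc (0:ℝ) t, gg (XX lam F0c Fc S0 I0 s),
         I0 * F0c t + lam * ∫ s in Ioc (0:ℝ) t, Fc (t - s) * gg (XX lam F0c Fc S0 I0 s)) := by
  set P := Pic lam F0c Fc S0 I0 with hPdef
  set X := XX lam F0c Fc S0 I0 with hXdef
  have htend : ∀ s, Filter.Tendsto (fun n => P n s) Filter.atTop (nhds (X s)) :=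
    Pic_tendsto lam F0c Fc S0 I0 hlam hF0c hFc hFc_mem
  have hPm : ∀ n, Measurable (P n) := Pic_measurable lam F0c Fc S0 I0 hF0c hFc
  have hXm : Measurable X := XX_measurable lam F0c Fc S0 I0 hlam hF0c hFc hFc_mem
  have hboundint : IntegrableOn (fun _ => (1:ℝ)) (Ioc (0:ℝ) t) := by
    exact integrableOn_const (by simp) (by simp)
  -- convergence of the two integrals
  have hI1 : Filter.Tendsto (fun n => ∫ s in Ioc (0:ℝ) t, gg (P n s)) Filter.atTop
      (nhds (∫ s in Ioc (0:ℝ) t, gg (X s))) := by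
    refine tendsto_integral_of_dominated_convergence (fun _ => (1:ℝ))
      (fun n => (gg_measurable.comp (hPm n)).aestronglyMeasurable) hboundint
      (fun n => Filter.Eventually.of_forall (fun s => by
        simpa [Real.norm_eq_abs] using gg_abs_le_one (P n s)))
      (Filter.Eventually.of_forall (fun s => (gg_continuous.tendsto _).comp (htend s)))
  have hI2 : Filter.Tendsto (fun n => ∫ s in Ioc (0:ℝ) t, Fc (t - s) * gg (P n s)) Filter.atTop
      (nhds (∫ s in Ioc (0:ℝ) t, Fc (t - s) * gg (X s))) := by
    refine tendsto_integral_of_dominated_convergence (fun s => |Fc (t - s)|)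
      (fun n => ((hFc.comp (measurable_const.sub measurable_id)).mul
        (gg_measurable.comp (hPm n))).aestronglyMeasurable) ?_
      (fun n => Filter.Eventually.of_forall (fun s => by
        rw [Real.norm_eq_abs, abs_mul]
        exact mul_le_of_le_one_right (abs_nonneg _) (gg_abs_le_one _)))
      (Filter.Eventually.of_forall (fun s =>
        (tendsto_const_nhds.mul ((gg_continuous.tendsto _).comp (htend s)))))
    · refine integrableOn_of_bdd (hFc.comp (measurable_const.sub measurable_id)).abs (B := 1) ?_
      intro s hs
      simp only [Function.comp_apply, id_eq, abs_abs, Pi.sub_apply]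
      have h0 : (0:ℝ) ≤ t - s := by linarith [hs.2]
      have := hFc_mem (t - s) h0
      rw [abs_le]; constructor <;> linarith [this.1, this.2]
  have hlhs : Filter.Tendsto (fun n => P (n+1) t) Filter.atTop (nhds (X t)) :=
    (htend t).comp (Filter.tendsto_add_atTop_nat 1)
  have hrhs : Filter.Tendsto (fun n => P (n+1) t) Filter.atTop
      (nhds ((S0 - lam * ∫ s in Ioc (0:ℝ) t, gg (X s),
        I0 * F0c t + lam * ∫ s in Ioc (0:ℝ) t, Fc (t - s) * gg (X s)) : ℝ × ℝ)) := by
    have : ∀ n, P (n+1) t = ((S0 - lam * ∫ s in Ioc (0:ℝ) t, gg (P n s),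
        I0 * F0c t + lam * ∫ s in Ioc (0:ℝ) t, Fc (t - s) * gg (P n s)) : ℝ × ℝ) := fun n => rfl
    simp_rw [this]
    exact Filter.Tendsto.prodMk_nhds
      (tendsto_const_nhds.sub (hI1.const_mul lam))
      (tendsto_const_nhds.add (hI2.const_mul lam))
  exact tendsto_nhds_unique hlhs hrhs

set_option maxHeartbeats 1000000 in
lemma XX_props (hlam : 0 ≤ lam) (hF0c : Measurable F0c) (hFc : Measurable Fc)
    (hF0c_mem : ∀ u, 0 ≤ u → F0c u ∈ Icc (0:ℝ) 1)
    (hFc_mem : ∀ u, 0 ≤ u → Fc u ∈ Icc (0:ℝ) 1)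
    (hS0 : S0 ∈ Icc (0:ℝ) 1) (hI0 : I0 ∈ Icc (0:ℝ) 1) (hsum : S0 + I0 ≤ 1) :
    ∀ t, 0 ≤ t → (XX lam F0c Fc S0 I0 t).1 ∈ Icc (0:ℝ) 1
      ∧ (XX lam F0c Fc S0 I0 t).2 ∈ Icc (0:ℝ) 1 := by
  have hXm : Measurable (XX lam F0c Fc S0 I0) :=
    XX_measurable lam F0c Fc S0 I0 hlam hF0c hFc hFc_mem
  have heq := XX_eq lam F0c Fc S0 I0 hlam hF0c hFc hFc_mem
  set X := XX lam F0c Fc S0 I0 with hXdef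
  clear_value X
  set S : ℝ → ℝ := fun t => (X t).1 with hSdef
  set I : ℝ → ℝ := fun t => (X t).2 with hIdef
  have hSeq : ∀ t, 0 ≤ t → S t = S0 - lam * ∫ s in Ioc (0:ℝ) t, gg (X s) := by
    intro t ht; show (X t).1 = _; rw [heq t ht]
  have hIeq : ∀ t, 0 ≤ t →
      I t = I0 * F0c t + lam * ∫ s in Ioc (0:ℝ) t, Fc (t - s) * gg (X s) := by
    intro t ht; show (X t).2 = _; rw [heq t ht]
  have hggX_m : Measurable fun s => gg (X s) := gg_measurable.comp hXm
  have hintgg : ∀ t : ℝ, IntegrableOn (fun s => gg (X s)) (Ioc 0 t) :=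
    fun t => integrableOn_of_bdd hggX_m (fun s _ => gg_abs_le_one _)
  have hS00 : S 0 = S0 := by rw [hSeq 0 le_rfl, Ioc_self]; simp
  -- nonnegativity of the gg integral
  have hint_nonneg : ∀ t : ℝ, 0 ≤ ∫ s in Ioc (0:ℝ) t, gg (X s) :=
    fun t => setIntegral_nonneg measurableSet_Ioc (fun s _ => gg_nonneg _)
  have hS_le : ∀ t, 0 ≤ t → S t ≤ S0 := by
    intro t ht
    rw [hSeq t ht]
    nlinarith [hint_nonneg t]
  -- additivity
  have hadd : ∀ a b : ℝ, 0 ≤ a → a ≤ b →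
      S b = S a - lam * ∫ s in Ioc a b, gg (X s) := by
    intro a b ha hab
    have hu : Ioc (0:ℝ) a ∪ Ioc a b = Ioc 0 b := Ioc_union_Ioc_eq_Ioc ha hab
    have hsplit : ∫ s in Ioc (0:ℝ) b, gg (X s)
        = (∫ s in Ioc (0:ℝ) a, gg (X s)) + ∫ s in Ioc a b, gg (X s) := by
      rw [← hu, setIntegral_union (Ioc_disjoint_Ioc_of_le le_rfl) measurableSet_Ioc
        ((hintgg a)) (integrableOn_of_bdd' hggX_m (B := 1) (fun s _ => gg_abs_le_one _))]
    rw [hSeq b (ha.trans hab), hSeq a ha, hsplit]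
    ring
  -- Lipschitz bound
  have hlip : ∀ a b : ℝ, 0 ≤ a → a ≤ b → |S b - S a| ≤ lam * (b - a) := by
    intro a b ha hab
    rw [hadd a b ha hab]
    have hb : |∫ s in Ioc a b, gg (X s)| ≤ 1 * (volume (Ioc a b)).toReal := by
      rw [← Real.norm_eq_abs]
      refine norm_setIntegral_le_of_norm_le_const (E := ℝ) (μ := volume) (s := Ioc a b)
        (f := fun s => gg (X s)) measure_Ioc_lt_top ?_
      intro x _
      rw [Real.norm_eq_abs]
      exact gg_abs_le_one (X x)
    have hv : (volume (Ioc a b)).toReal = b - a := by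
      rw [Real.volume_Ioc, ENNReal.toReal_ofReal (by linarith)]
    rw [hv, one_mul] at hb
    have : |S a - lam * (∫ s in Ioc a b, gg (X s)) - S a|
        = lam * |∫ s in Ioc a b, gg (X s)| := by
      rw [show S a - lam * (∫ s in Ioc a b, gg (X s)) - S a
        = -(lam * ∫ s in Ioc a b, gg (X s)) by ring, abs_neg, abs_mul, abs_of_nonneg hlam]
    rw [this]
    exact mul_le_mul_of_nonneg_left hb hlam
  have hScont : ContinuousOn S (Ici 0) := by
    refine LipschitzOnWith.continuousOn (K := lam.toNNReal)
      (LipschitzOnWith.of_dist_le_mul ?_)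
    intro x hx y hy
    rw [Real.dist_eq, Real.dist_eq, Real.coe_toNNReal lam hlam]
    rcases le_total x y with h | h
    · rw [abs_sub_comm (S x) (S y), abs_sub_comm x y,
        abs_of_nonneg (by linarith : (0:ℝ) ≤ y - x)]
      exact hlip x y hx h
    · rw [abs_of_nonneg (by linarith : (0:ℝ) ≤ x - y)]
      exact hlip y x hy h
  -- S nonneg
  have hS_nonneg : ∀ t, 0 ≤ t → 0 ≤ S t := by
    intro t1 ht1
    by_contra hneg
    push_neg at hneg
    set A := Icc (0:ℝ) t1 ∩ S ⁻¹' (Ici 0) with hA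
    have hAne : A.Nonempty := ⟨0, ⟨le_rfl, ht1⟩, by rw [mem_preimage, hS00]; exact hS0.1⟩
    have hAc : IsCompact A := by
      refine IsCompact.of_isClosed_subset isCompact_Icc ?_ inter_subset_left
      exact (hScont.mono (Icc_subset_Ici_self)).preimage_isClosed_of_isClosed
        isClosed_Icc isClosed_Ici
    have hτA : sSup A ∈ A := IsCompact.sSup_mem hAc hAne
    set τ := sSup A with hτ
    have hτ0 : 0 ≤ τ := hτA.1.1
    have hτt1 : τ ≤ t1 := hτA.1.2
    have hSτ : 0 ≤ S τ := hτA.2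
    have hτlt : τ < t1 := lt_of_le_of_ne hτt1 (by
      intro h; rw [h] at hSτ; linarith)
    have hzero : ∀ u ∈ Ioc τ t1, gg (X u) = 0 := by
      intro u hu
      have huA : u ∉ A := by
        intro huA
        exact absurd (le_csSup hAc.bddAbove huA) (not_le.2 hu.1)
      have hu1 : u ∈ Icc (0:ℝ) t1 := ⟨hτ0.trans hu.1.le, hu.2⟩
      have hSu : S u < 0 := by
        by_contra h
        push_neg at h
        exact huA ⟨hu1, h⟩
      show cl (X u).1 * cl (X u).2 = 0
      have : cl (X u).1 = 0 := by
        have : min 1 (X u).1 ≤ 0 := (min_le_right _ _).trans (le_of_lt hSu)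
        simpa [cl] using max_eq_left this
      rw [this, zero_mul]
    have : S t1 = S τ := by
      rw [hadd τ t1 hτ0 hτlt.le]
      rw [setIntegral_congr_fun measurableSet_Ioc (fun u hu => hzero u hu)]
      simp
    rw [this] at hneg
    linarith
  -- I nonneg
  have hI_nonneg : ∀ t, 0 ≤ t → 0 ≤ I t := by
    intro t ht
    rw [hIeq t ht]
    have h1 : 0 ≤ I0 * F0c t := mul_nonneg hI0.1 (hF0c_mem t ht).1
    have h2 : 0 ≤ ∫ s in Ioc (0:ℝ) t, Fc (t - s) * gg (X s) := by
      refine setIntegral_nonneg measurableSet_Ioc ?_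
      intro s hs
      exact mul_nonneg (hFc_mem (t - s) (by linarith [hs.2])).1 (gg_nonneg _)
    nlinarith
  -- sum bound
  have hsum_le : ∀ t, 0 ≤ t → S t + I t ≤ 1 := by
    intro t ht
    rw [hSeq t ht, hIeq t ht]
    have hintF : IntegrableOn (fun s => Fc (t - s) * gg (X s)) (Ioc 0 t) := by
      refine integrableOn_of_bdd ((hFc.comp (measurable_const.sub measurable_id)).mul hggX_m)
        (B := 1) ?_
      intro s hs
      simp only [Function.comp_apply, id_eq, Pi.mul_apply, Pi.sub_apply]
      rw [abs_mul]
      have h0 : (0:ℝ) ≤ t - s := by linarith [hs.2]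
      have hm := hFc_mem (t - s) h0
      refine mul_le_one₀ ?_ (abs_nonneg _) (gg_abs_le_one _)
      rw [abs_le]; constructor <;> linarith [hm.1, hm.2]
    have hcomb : (∫ s in Ioc (0:ℝ) t, Fc (t - s) * gg (X s)) - ∫ s in Ioc (0:ℝ) t, gg (X s)
        = ∫ s in Ioc (0:ℝ) t, (Fc (t - s) - 1) * gg (X s) := by
      rw [← integral_sub hintF (hintgg t)]
      congr 1
      funext s
      ring
    have hle : (∫ s in Ioc (0:ℝ) t, (Fc (t - s) - 1) * gg (X s)) ≤ 0 := by
      refine setIntegral_nonpos measurableSet_Ioc ?_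
      intro s hs
      have h0 : (0:ℝ) ≤ t - s := by linarith [hs.2]
      have hm := hFc_mem (t - s) h0
      exact mul_nonpos_of_nonpos_of_nonneg (by linarith [hm.2]) (gg_nonneg _)
    have hF0 : I0 * F0c t ≤ I0 := mul_le_of_le_one_right hI0.1 (hF0c_mem t ht).2
    nlinarith [hcomb, hle]
  intro t ht
  refine ⟨⟨hS_nonneg t ht, (hS_le t ht).trans hS0.2⟩,
    ⟨hI_nonneg t ht, ?_⟩⟩
  have := hsum_le t ht
  have := hS_nonneg t ht
  show I t ≤ 1
  linarith

end Picard

end VolterraSIR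

open VolterraSIR in
/-- The Volterra integral system
`S̄(t) = S̄(0) - λ∫₀ᵗ S̄ Ī ds`, `Ī(t) = Ī(0)F₀ᶜ(t) + λ∫₀ᵗ Fᶜ(t-s) S̄(s)Ī(s) ds`
has a solution with values in `[0,1]²` on `[0,∞)`, and any two such solutions agree
on `[0,∞)`. -/
theorem volterra_sir_existence_uniqueness
    (lam : ℝ) (hlam : 0 < lam)
    (F0c Fc : ℝ → ℝ)
    (hF0c_meas : Measurable F0c) (hFc_meas : Measurable Fc)
    (hF0c_anti : AntitoneOn F0c (Set.Ici 0)) (hFc_anti : AntitoneOn Fc (Set.Ici 0))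
    (hF0c_mem : ∀ t, 0 ≤ t → F0c t ∈ Set.Icc (0:ℝ) 1)
    (hFc_mem : ∀ t, 0 ≤ t → Fc t ∈ Set.Icc (0:ℝ) 1)
    (hF0c_rc : ∀ t, 0 ≤ t → ContinuousWithinAt F0c (Set.Ici t) t)
    (hFc_rc : ∀ t, 0 ≤ t → ContinuousWithinAt Fc (Set.Ici t) t)
    (S0 I0 : ℝ) (hS0 : S0 ∈ Set.Icc (0:ℝ) 1) (hI0 : I0 ∈ Set.Icc (0:ℝ) 1)
    (hsum : S0 + I0 ≤ 1) :
    (∃ S I : ℝ → ℝ,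
      Measurable S ∧ Measurable I
      ∧ (∀ t, 0 ≤ t → S t ∈ Set.Icc (0:ℝ) 1 ∧ I t ∈ Set.Icc (0:ℝ) 1)
      ∧ (∀ t, 0 ≤ t →
          S t = S0 - lam * ∫ s in (0:ℝ)..t, S s * I s)
      ∧ (∀ t, 0 ≤ t →
          I t = I0 * F0c t + lam * ∫ s in (0:ℝ)..t, Fc (t - s) * (S s * I s)))
    ∧ (∀ S₁ I₁ S₂ I₂ : ℝ → ℝ,
        Measurable S₁ → Measurable I₁ → Measurable S₂ → Measurable I₂ →
        (∀ t, 0 ≤ t → S₁ t ∈ Set.Icc (0:ℝ) 1 ∧ I₁ t ∈ Set.Icc (0:ℝ) 1) →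
        (∀ t, 0 ≤ t → S₂ t ∈ Set.Icc (0:ℝ) 1 ∧ I₂ t ∈ Set.Icc (0:ℝ) 1) →
        (∀ t, 0 ≤ t → S₁ t = S0 - lam * ∫ s in (0:ℝ)..t, S₁ s * I₁ s) →
        (∀ t, 0 ≤ t → I₁ t = I0 * F0c t + lam * ∫ s in (0:ℝ)..t, Fc (t - s) * (S₁ s * I₁ s)) →
        (∀ t, 0 ≤ t → S₂ t = S0 - lam * ∫ s in (0:ℝ)..t, S₂ s * I₂ s) →
        (∀ t, 0 ≤ t → I₂ t = I0 * F0c t + lam * ∫ s in (0:ℝ)..t, Fc (t - s) * (S₂ s * I₂ s)) →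
        ∀ t, 0 ≤ t → S₁ t = S₂ t ∧ I₁ t = I₂ t) := by
  have hlam0 : (0:ℝ) ≤ lam := hlam.le
  constructor
  · -- existence
    have hXm : Measurable (XX lam F0c Fc S0 I0) :=
      XX_measurable lam F0c Fc S0 I0 hlam0 hF0c_meas hFc_meas hFc_mem
    have heq := XX_eq lam F0c Fc S0 I0 hlam0 hF0c_meas hFc_meas hFc_mem
    have hprops := XX_props lam F0c Fc S0 I0 hlam0 hF0c_meas hFc_meas hF0c_mem hFc_mem
      hS0 hI0 hsum
    set X := XX lam F0c Fc S0 I0 with hXdef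
    clear_value X
    refine ⟨fun t => (X t).1, fun t => (X t).2, measurable_fst.comp hXm,
      measurable_snd.comp hXm, hprops, ?_, ?_⟩
    · intro t ht
      rw [intervalIntegral.integral_of_le ht]
      have hcongr : ∫ s in Set.Ioc (0:ℝ) t, (X s).1 * (X s).2
          = ∫ s in Set.Ioc (0:ℝ) t, gg (X s) := by
        refine setIntegral_congr_fun measurableSet_Ioc ?_
        intro s hs
        have hp := hprops s hs.1.le
        show (X s).1 * (X s).2 = cl (X s).1 * cl (X s).2
        rw [cl_eq hp.1, cl_eq hp.2]
      rw [hcongr]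
      have := heq t ht
      exact congrArg Prod.fst this
    · intro t ht
      rw [intervalIntegral.integral_of_le ht]
      have hcongr : ∫ s in Set.Ioc (0:ℝ) t, Fc (t - s) * ((X s).1 * (X s).2)
          = ∫ s in Set.Ioc (0:ℝ) t, Fc (t - s) * gg (X s) := by
        refine setIntegral_congr_fun measurableSet_Ioc ?_
        intro s hs
        have hp := hprops s hs.1.le
        show Fc (t - s) * ((X s).1 * (X s).2) = Fc (t - s) * (cl (X s).1 * cl (X s).2)
        rw [cl_eq hp.1, cl_eq hp.2]
      rw [hcongr]
      have := heq t ht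
      exact congrArg Prod.snd this
  · -- uniqueness
    intro S₁ I₁ S₂ I₂ hmS₁ hmI₁ hmS₂ hmI₂ hmem₁ hmem₂ heqS₁ heqI₁ heqS₂ heqI₂
    set D : ℝ → ℝ := fun s => |S₁ s - S₂ s| + |I₁ s - I₂ s| with hD
    have hDm : Measurable D := ((hmS₁.sub hmS₂).abs.add (hmI₁.sub hmI₂).abs)
    have hDnn : ∀ s, 0 ≤ D s := fun s => add_nonneg (abs_nonneg _) (abs_nonneg _)
    have hDb : ∀ s, 0 ≤ s → D s ≤ 2 := by
      intro s hs
      have h1 := hmem₁ s hs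
      have h2 := hmem₂ s hs
      have e1 : |S₁ s - S₂ s| ≤ 1 := abs_le.2
        ⟨by linarith [(h1.1).1, (h2.1).2], by linarith [(h1.1).2, (h2.1).1]⟩
      have e2 : |I₁ s - I₂ s| ≤ 1 := abs_le.2
        ⟨by linarith [(h1.2).1, (h2.2).2], by linarith [(h1.2).2, (h2.2).1]⟩
      show |S₁ s - S₂ s| + |I₁ s - I₂ s| ≤ 2
      linarith
    -- pointwise product difference bound
    have hprod : ∀ s, 0 ≤ s → |S₁ s * I₁ s - S₂ s * I₂ s| ≤ D s := by
      intro s hs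
      have h1 := hmem₁ s hs
      have h2 := hmem₂ s hs
      have e : S₁ s * I₁ s - S₂ s * I₂ s
          = S₁ s * (I₁ s - I₂ s) + I₂ s * (S₁ s - S₂ s) := by ring
      rw [e]
      calc |S₁ s * (I₁ s - I₂ s) + I₂ s * (S₁ s - S₂ s)|
          ≤ |S₁ s * (I₁ s - I₂ s)| + |I₂ s * (S₁ s - S₂ s)| := abs_add_le _ _
        _ = |S₁ s| * |I₁ s - I₂ s| + |I₂ s| * |S₁ s - S₂ s| := by rw [abs_mul, abs_mul]
        _ ≤ 1 * |I₁ s - I₂ s| + 1 * |S₁ s - S₂ s| := by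
            have b1 : |S₁ s| ≤ 1 := abs_le.2 ⟨by linarith [(h1.1).1], (h1.1).2⟩
            have b2 : |I₂ s| ≤ 1 := abs_le.2 ⟨by linarith [(h2.2).1], (h2.2).2⟩
            have := mul_le_mul_of_nonneg_right b1 (abs_nonneg (I₁ s - I₂ s))
            have := mul_le_mul_of_nonneg_right b2 (abs_nonneg (S₁ s - S₂ s))
            nlinarith [abs_nonneg (I₁ s - I₂ s), abs_nonneg (S₁ s - S₂ s)]
        _ = D s := by show _ = |S₁ s - S₂ s| + |I₁ s - I₂ s|; ring
    have hintprod : ∀ (Sa Ia : ℝ → ℝ), Measurable Sa → Measurable Ia →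
        (∀ s, 0 ≤ s → Sa s ∈ Set.Icc (0:ℝ) 1 ∧ Ia s ∈ Set.Icc (0:ℝ) 1) →
        ∀ t : ℝ, IntegrableOn (fun s => Sa s * Ia s) (Set.Ioc 0 t) := by
      intro Sa Ia hmSa hmIa hmema t
      refine integrableOn_of_bdd (hmSa.mul hmIa) (B := 1) ?_
      intro s hs
      have h := hmema s hs.1.le
      show |Sa s * Ia s| ≤ 1
      rw [abs_mul]
      exact mul_le_one₀ (abs_le.2 ⟨by linarith [(h.1).1], (h.1).2⟩) (abs_nonneg _)
        (abs_le.2 ⟨by linarith [(h.2).1], (h.2).2⟩)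
    have hintprodF : ∀ (Sa Ia : ℝ → ℝ), Measurable Sa → Measurable Ia →
        (∀ s, 0 ≤ s → Sa s ∈ Set.Icc (0:ℝ) 1 ∧ Ia s ∈ Set.Icc (0:ℝ) 1) →
        ∀ t : ℝ, 0 ≤ t →
          IntegrableOn (fun s => Fc (t - s) * (Sa s * Ia s)) (Set.Ioc 0 t) := by
      intro Sa Ia hmSa hmIa hmema t ht
      refine integrableOn_of_bdd
        ((hFc_meas.comp (measurable_const.sub measurable_id)).mul (hmSa.mul hmIa)) (B := 1) ?_
      intro s hs
      have h := hmema s hs.1.le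
      have h0 : (0:ℝ) ≤ t - s := by linarith [hs.2]
      have hFcm := hFc_mem (t - s) h0
      show |Fc (t - s) * (Sa s * Ia s)| ≤ 1
      rw [abs_mul, abs_mul]
      refine mul_le_one₀ (abs_le.2 ⟨by linarith [hFcm.1], hFcm.2⟩) (mul_nonneg (abs_nonneg _) (abs_nonneg _)) ?_
      exact mul_le_one₀ (abs_le.2 ⟨by linarith [(h.1).1], (h.1).2⟩) (abs_nonneg _)
        (abs_le.2 ⟨by linarith [(h.2).1], (h.2).2⟩)
    have hrec : ∀ t, 0 ≤ t → D t ≤ (2*lam) * ∫ s in Set.Ioc (0:ℝ) t, D s := by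
      intro t ht
      have hDB : ∀ s ∈ Set.Ioc (0:ℝ) t, D s ≤ 2 := fun s hs => hDb s hs.1.le
      have hdiffS : S₁ t - S₂ t
          = -(lam * ∫ s in Set.Ioc (0:ℝ) t, (S₁ s * I₁ s - S₂ s * I₂ s)) := by
        rw [heqS₁ t ht, heqS₂ t ht, intervalIntegral.integral_of_le ht,
          intervalIntegral.integral_of_le ht,
          integral_sub (hintprod S₁ I₁ hmS₁ hmI₁ hmem₁ t) (hintprod S₂ I₂ hmS₂ hmI₂ hmem₂ t)]
        ring
      have hdiffI : I₁ t - I₂ t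
          = lam * ∫ s in Set.Ioc (0:ℝ) t, Fc (t - s) * (S₁ s * I₁ s - S₂ s * I₂ s) := by
        rw [heqI₁ t ht, heqI₂ t ht, intervalIntegral.integral_of_le ht,
          intervalIntegral.integral_of_le ht]
        have hc : ∀ s, Fc (t - s) * (S₁ s * I₁ s - S₂ s * I₂ s)
            = Fc (t - s) * (S₁ s * I₁ s) - Fc (t - s) * (S₂ s * I₂ s) := fun s => by ring
        simp_rw [hc]
        rw [integral_sub (hintprodF S₁ I₁ hmS₁ hmI₁ hmem₁ t ht)
          (hintprodF S₂ I₂ hmS₂ hmI₂ hmem₂ t ht)]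
        ring
      have hb1 : |∫ s in Set.Ioc (0:ℝ) t, (S₁ s * I₁ s - S₂ s * I₂ s)|
          ≤ ∫ s in Set.Ioc (0:ℝ) t, D s := by
        refine abs_setIntegral_le ((hmS₁.mul hmI₁).sub (hmS₂.mul hmI₂)) hDm
          (fun s hs => hprod s hs.1.le) hDB
      have hb2 : |∫ s in Set.Ioc (0:ℝ) t, Fc (t - s) * (S₁ s * I₁ s - S₂ s * I₂ s)|
          ≤ ∫ s in Set.Ioc (0:ℝ) t, D s := by
        refine abs_setIntegral_le
          ((hFc_meas.comp (measurable_const.sub measurable_id)).mul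
            ((hmS₁.mul hmI₁).sub (hmS₂.mul hmI₂))) hDm ?_ hDB
        intro s hs
        have h0 : (0:ℝ) ≤ t - s := by linarith [hs.2]
        have hFcm := hFc_mem (t - s) h0
        show |Fc (t - s) * (S₁ s * I₁ s - S₂ s * I₂ s)| ≤ D s
        rw [abs_mul]
        calc |Fc (t - s)| * |S₁ s * I₁ s - S₂ s * I₂ s| ≤ 1 * D s :=
              mul_le_mul (abs_le.2 ⟨by linarith [hFcm.1], hFcm.2⟩) (hprod s hs.1.le)
                (abs_nonneg _) zero_le_one
          _ = D s := one_mul _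
      have e1 : |S₁ t - S₂ t| ≤ lam * ∫ s in Set.Ioc (0:ℝ) t, D s := by
        rw [hdiffS, abs_neg, abs_mul, abs_of_nonneg hlam0]
        exact mul_le_mul_of_nonneg_left hb1 hlam0
      have e2 : |I₁ t - I₂ t| ≤ lam * ∫ s in Set.Ioc (0:ℝ) t, D s := by
        rw [hdiffI, abs_mul, abs_of_nonneg hlam0]
        exact mul_le_mul_of_nonneg_left hb2 hlam0
      show |S₁ t - S₂ t| + |I₁ t - I₂ t| ≤ _
      calc |S₁ t - S₂ t| + |I₁ t - I₂ t|
          ≤ lam * (∫ s in Set.Ioc (0:ℝ) t, D s) + lam * ∫ s in Set.Ioc (0:ℝ) t, D s :=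
            add_le_add e1 e2
        _ = (2*lam) * ∫ s in Set.Ioc (0:ℝ) t, D s := by ring
    have hzero := gronwall_zero (K := 2*lam) (C := 2) (by linarith) (by norm_num)
      hDm (fun t ht => hDnn t) hDb hrec
    intro t ht
    have := hzero t ht
    have h1 : |S₁ t - S₂ t| = 0 ∧ |I₁ t - I₂ t| = 0 := by
      constructor <;> [skip; skip] <;>
        · have ha := abs_nonneg (S₁ t - S₂ t)
          have hb := abs_nonneg (I₁ t - I₂ t)
          have hD0 : |S₁ t - S₂ t| + |I₁ t - I₂ t| = 0 := this
          linarith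
    exact ⟨by have := abs_eq_zero.1 h1.1; linarith,
      by have := abs_eq_zero.1 h1.2; linarith⟩
end

section
/- Let R₀ = ∫₀^∞ λ̄(t) dt > 1, let ρ > 0 satisfy ∫₀^∞ λ̄(t) e^{-ρt} dt = 1, and define λ̄_ρ(t) = (∫₀^∞ λ̄(t+s) e^{-ρs} ds)/(∫₀^∞ F^c(s) e^{-ρs} ds), F_ρ^c(t) = (∫₀^∞ F^c(t+s) e^{-ρs} ds)/(∫₀^∞ F^c(s) e^{-ρs} ds), and 𝐢 = ∫₀^∞ F^c(s) ρ e^{-ρs} ds. Then the functions 𝔉(t) = ρ e^{ρt}, I(t) = 𝐢 e^{ρt} satisfy the linear system 𝔉(t) = I(0) λ̄_ρ(t) + ∫₀ᵗ λ̄(t-s) 𝔉(s) ds and I(t) = I(0) F_ρ^c(t) + ∫₀ᵗ F^c(t-s) 𝔉(s) ds, where I(0) = 𝐢. -/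
open MeasureTheory

lemma shift_integral_aux (g : ℝ → ℝ) (t : ℝ) :
    ∫ s in Set.Ioi (0:ℝ), g (t + s) = ∫ u in Set.Ioi t, g u := by
  have h : MeasurePreserving (fun s : ℝ => t + s) volume volume :=
    measurePreserving_add_left volume t
  have he : MeasurableEmbedding (fun s : ℝ => t + s) :=
    (Homeomorph.addLeft t).isClosedEmbedding.measurableEmbedding
  have := h.setIntegral_preimage_emb he g (Set.Ioi t)
  have hpre : (fun s : ℝ => t + s) ⁻¹' Set.Ioi t = Set.Ioi 0 := by
    ext s; simp [Set.mem_preimage, Set.mem_Ioi]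
  rw [hpre] at this
  exact this

/-- If `R₀ > 1` and `ρ > 0` satisfies `∫₀^∞ λ̄(t)e^{-ρt} dt = 1`, then the exponential
functions `𝔉(t) = ρe^{ρt}` and `I(t) = 𝐢 e^{ρt}` solve the linear early-phase system
with the `ρ`-tilted initial data `λ̄_ρ` and `F_ρᶜ`, where `𝐢 = ∫₀^∞ Fᶜ(s) ρ e^{-ρs} ds`. -/
theorem exponential_solution_early_phase
    (lamb Fc : ℝ → ℝ)
    (hlmeas : Measurable lamb) (hlnn : ∀ t, 0 ≤ lamb t)
    (hFc_meas : Measurable Fc) (hFc_mem : ∀ t, 0 ≤ t → Fc t ∈ Set.Icc (0:ℝ) 1)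
    (hFc_anti : AntitoneOn Fc (Set.Ici 0))
    (hlint : IntegrableOn lamb (Set.Ioi 0))
    (R0 : ℝ) (hR0 : R0 = ∫ t in Set.Ioi (0:ℝ), lamb t) (hR0gt : 1 < R0)
    (rho : ℝ) (hrhopos : 0 < rho)
    (hrhoint : IntegrableOn (fun t => lamb t * Real.exp (-rho * t)) (Set.Ioi 0))
    (hrho : ∫ t in Set.Ioi (0:ℝ), lamb t * Real.exp (-rho * t) = 1)
    (hshift_int : ∀ t, 0 ≤ t →
      IntegrableOn (fun s => lamb (t + s) * Real.exp (-rho * s)) (Set.Ioi 0))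
    (hFc_int : ∀ t, 0 ≤ t →
      IntegrableOn (fun s => Fc (t + s) * Real.exp (-rho * s)) (Set.Ioi 0))
    (hloc : ∀ t, 0 ≤ t →
      IntervalIntegrable (fun s => lamb (t - s) * (rho * Real.exp (rho * s))) volume 0 t)
    (D i : ℝ)
    (hD : D = ∫ s in Set.Ioi (0:ℝ), Fc s * Real.exp (-rho * s)) (hDpos : 0 < D)
    (hi : i = ∫ s in Set.Ioi (0:ℝ), Fc s * (rho * Real.exp (-rho * s)))
    (lambRho FcRho : ℝ → ℝ)
    (hlambRho : ∀ t, lambRho t = (∫ s in Set.Ioi (0:ℝ), lamb (t + s) * Real.exp (-rho * s)) / D)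
    (hFcRho : ∀ t, FcRho t = (∫ s in Set.Ioi (0:ℝ), Fc (t + s) * Real.exp (-rho * s)) / D) :
    ∀ t, 0 ≤ t →
      (rho * Real.exp (rho * t)
        = i * lambRho t + ∫ s in (0:ℝ)..t, lamb (t - s) * (rho * Real.exp (rho * s)))
      ∧ (i * Real.exp (rho * t)
        = i * FcRho t + ∫ s in (0:ℝ)..t, Fc (t - s) * (rho * Real.exp (rho * s))) := by
  -- i = rho * D
  have hiD : i = rho * D := by
    rw [hi, hD, ← integral_const_mul]
    congr 1; ext s; ring
  intro t ht
  set g : ℝ → ℝ := fun u => lamb u * Real.exp (-rho * u) with hg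
  set g2 : ℝ → ℝ := fun u => Fc u * Real.exp (-rho * u) with hg2
  -- shift identity for a general function
  have hshift : ∀ f : ℝ → ℝ,
      (∫ s in Set.Ioi (0:ℝ), f (t + s) * Real.exp (-rho * s))
        = Real.exp (rho * t) * ∫ u in Set.Ioi t, f u * Real.exp (-rho * u) := by
    intro f
    have h1 : (∫ s in Set.Ioi (0:ℝ), f (t + s) * Real.exp (-rho * s))
        = ∫ s in Set.Ioi (0:ℝ), Real.exp (rho * t) * (f (t + s) * Real.exp (-rho * (t + s))) := by
      congr 1; ext s
      have he : Real.exp (rho * t) * Real.exp (-rho * (t + s)) = Real.exp (-rho * s) := by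
        rw [← Real.exp_add]; ring_nf
      rw [mul_left_comm, he]
    rw [h1, integral_const_mul,
      shift_integral_aux (fun u => f u * Real.exp (-rho * u)) t]
  -- substitution in the interval integral
  have hsub : ∀ f : ℝ → ℝ,
      (∫ s in (0:ℝ)..t, f (t - s) * (rho * Real.exp (rho * s)))
        = rho * Real.exp (rho * t) * ∫ u in Set.Ioc (0:ℝ) t, f u * Real.exp (-rho * u) := by
    intro f
    have h1 : (∫ s in (0:ℝ)..t, f (t - s) * (rho * Real.exp (rho * s)))
        = ∫ s in (0:ℝ)..t,
            (fun u => f u * (rho * Real.exp (rho * (t - u)))) (t - s) := by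
      congr 1; ext s
      simp only
      ring_nf
    rw [h1, intervalIntegral.integral_comp_sub_left
        (fun u => f u * (rho * Real.exp (rho * (t - u)))) t, sub_self, sub_zero]
    have h2 : (∫ u in (0:ℝ)..t, f u * (rho * Real.exp (rho * (t - u))))
        = ∫ u in (0:ℝ)..t, rho * Real.exp (rho * t) * (f u * Real.exp (-rho * u)) := by
      congr 1; ext u
      rw [mul_sub, Real.exp_sub,
        show Real.exp (-rho * u) = (Real.exp (rho * u))⁻¹ by rw [← Real.exp_neg]; ring_nf,
        div_eq_mul_inv]
      ring
    rw [h2, intervalIntegral.integral_const_mul, intervalIntegral.integral_of_le ht]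
  -- splitting Ioi 0 = Ioc 0 t ∪ Ioi t
  have hsplit : ∀ f : ℝ → ℝ, IntegrableOn (fun u => f u * Real.exp (-rho * u)) (Set.Ioi 0) →
      (∫ u in Set.Ioc (0:ℝ) t, f u * Real.exp (-rho * u))
        + (∫ u in Set.Ioi t, f u * Real.exp (-rho * u))
        = ∫ u in Set.Ioi (0:ℝ), f u * Real.exp (-rho * u) := by
    intro f hf
    rw [← setIntegral_union (Set.Ioc_disjoint_Ioi le_rfl) measurableSet_Ioi
      (hf.mono_set Set.Ioc_subset_Ioi_self) (hf.mono_set (Set.Ioi_subset_Ioi ht)),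
      Set.Ioc_union_Ioi_eq_Ioi ht]
  have hFcint0 : IntegrableOn (fun u => Fc u * Real.exp (-rho * u)) (Set.Ioi 0) := by
    have := hFc_int 0 le_rfl
    simpa using this
  have hDne : D ≠ 0 := ne_of_gt hDpos
  constructor
  · rw [hlambRho t, hiD, hshift lamb, hsub lamb]
    set A := ∫ u in Set.Ioi t, lamb u * Real.exp (-rho * u) with hA
    set B := ∫ u in Set.Ioc (0:ℝ) t, lamb u * Real.exp (-rho * u) with hB
    have hAB : B + A = 1 := (hsplit lamb hrhoint).trans hrho
    have h3 : rho * D * (Real.exp (rho * t) * A / D) = rho * Real.exp (rho * t) * A := by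
      field_simp
    rw [h3]
    linear_combination (-(rho * Real.exp (rho * t))) * hAB
  · rw [hFcRho t, hiD, hshift Fc, hsub Fc]
    set A := ∫ u in Set.Ioi t, Fc u * Real.exp (-rho * u) with hA
    set B := ∫ u in Set.Ioc (0:ℝ) t, Fc u * Real.exp (-rho * u) with hB
    have hAB : B + A = D := (hsplit Fc hFcint0).trans hD.symm
    have h3 : rho * D * (Real.exp (rho * t) * A / D) = rho * Real.exp (rho * t) * A := by
      field_simp
    rw [h3]
    linear_combination (-(rho * Real.exp (rho * t))) * hAB
end

section
/- The Volterra equation x(t) = (S̄(0) - ∫₀ᵗ x(s) ds)⁺ · (g₀(t) + ∫₀ᵗ λ̄(t-s) x(s) ds), where g₀ is bounded measurable nonnegative with g₀ ≤ λ* Ī(0) and λ̄: [0,∞) → [0, λ*], has a unique nonnegative locally bounded solution x, and any such solution satisfies ∫₀ᵗ x(s) ds ≤ S̄(0) and 0 ≤ x(t) ≤ λ*(Ī(0) + S̄(0)) · e^{λ* t} for all t ≥ 0 (in particular the positive part is never active: ∫₀ᵗ x(s) ds ≤ S̄(0)). -/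
open MeasureTheory Set Filter Topology

section BVEhelpers

lemma bve_intInt {x : ℝ → ℝ} (hx : Measurable x) {a b C : ℝ} (hab : a ≤ b)
    (hC : ∀ s ∈ Set.Ioc a b, |x s| ≤ C) : IntervalIntegrable x volume a b := by
  rw [intervalIntegrable_iff_integrableOn_Ioc_of_le hab]
  refine Integrable.mono' (integrable_const C) hx.aestronglyMeasurable.restrict ?_
  refine (ae_restrict_iff' measurableSet_Ioc).2 (ae_of_all _ ?_)
  intro s hs; simpa [Real.norm_eq_abs] using hC s hs

lemma bve_meas_int (f : ℝ × ℝ → ℝ) (hf : Measurable f) :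
    Measurable (fun t => ∫ s in (0:ℝ)..t, f (t, s)) := by
  have hset1 : MeasurableSet {p : ℝ × ℝ | p.2 ∈ Set.Ioc 0 p.1} :=
    (measurableSet_lt measurable_const measurable_snd).inter
      (measurableSet_le measurable_snd measurable_fst)
  have hset2 : MeasurableSet {p : ℝ × ℝ | p.2 ∈ Set.Ioc p.1 0} :=
    (measurableSet_lt measurable_fst measurable_snd).inter
      (measurableSet_le measurable_snd measurable_const)
  have key : ∀ (S : Set (ℝ × ℝ)), MeasurableSet S →
      Measurable (fun t => ∫ s, S.indicator f (t, s)) := by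
    intro S hS
    exact ((hf.indicator hS).stronglyMeasurable.integral_prod_right').measurable
  have h1 := key _ hset1
  have h2 := key _ hset2
  have e1 : ∀ t : ℝ, (fun s => ({p : ℝ × ℝ | p.2 ∈ Set.Ioc 0 p.1}).indicator f (t, s))
      = (Set.Ioc (0:ℝ) t).indicator (fun s => f (t, s)) := by
    intro t; funext s
    rfl
  have e2 : ∀ t : ℝ, (fun s => ({p : ℝ × ℝ | p.2 ∈ Set.Ioc p.1 0}).indicator f (t, s))
      = (Set.Ioc t (0:ℝ)).indicator (fun s => f (t, s)) := by
    intro t; funext s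
    rfl
  have : (fun t => ∫ s in (0:ℝ)..t, f (t, s))
      = fun t => (∫ s, ({p : ℝ × ℝ | p.2 ∈ Set.Ioc 0 p.1}).indicator f (t, s))
        - (∫ s, ({p : ℝ × ℝ | p.2 ∈ Set.Ioc p.1 0}).indicator f (t, s)) := by
    funext t
    rw [intervalIntegral, e1 t, e2 t, integral_indicator measurableSet_Ioc,
      integral_indicator measurableSet_Ioc]
  rw [this]
  exact h1.sub h2

lemma bve_apriori
    (lamstar : ℝ) (hlamstar : 0 < lamstar)
    (S0 : ℝ) (hS0 : S0 ∈ Set.Ioc (0:ℝ) 1)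
    (I0 : ℝ) (hI0 : I0 ∈ Set.Ioo (0:ℝ) 1)
    (g0 : ℝ → ℝ) (hg0 : ∀ t, 0 ≤ t → g0 t ∈ Set.Icc 0 (lamstar * I0))
    (lamb : ℝ → ℝ) (hl_meas : Measurable lamb)
    (hl : ∀ t, 0 ≤ t → lamb t ∈ Set.Icc (0:ℝ) lamstar)
    (x : ℝ → ℝ) (hxm : Measurable x)
    (hx0 : ∀ t, 0 ≤ t → 0 ≤ x t)
    (hxb : ∀ T, 0 < T → ∃ C, ∀ t ∈ Set.Icc (0:ℝ) T, x t ≤ C)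
    (hxe : ∀ t, 0 ≤ t → x t = max (S0 - ∫ s in (0:ℝ)..t, x s) 0
        * (g0 t + ∫ s in (0:ℝ)..t, lamb (t - s) * x s)) :
    ∀ t, 0 ≤ t → (∫ s in (0:ℝ)..t, x s) ≤ S0 ∧ x t ≤ lamstar * (I0 + S0) := by
  have claimF : ∀ t, 0 ≤ t → (∫ s in (0:ℝ)..t, x s) ≤ S0 := by
    intro t ht
    rcases eq_or_lt_of_le ht with h0 | htpos
    · simp [← h0]; exact le_of_lt hS0.1
    by_contra hgt
    push_neg at hgt
    obtain ⟨C, hC⟩ := hxb t htpos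
    set C' := max C 0 with hC'def
    have hC'0 : 0 ≤ C' := le_max_right _ _
    have hbd : ∀ s ∈ Set.Icc (0:ℝ) t, x s ≤ C' := fun s hs => (hC s hs).trans (le_max_left _ _)
    have Ix : ∀ a b : ℝ, 0 ≤ a → a ≤ b → b ≤ t → IntervalIntegrable x volume a b := by
      intro a b ha hab hbt
      refine bve_intInt hxm hab (C := C') (fun s hs => ?_)
      have hs0 : 0 ≤ s := le_of_lt (lt_of_le_of_lt ha hs.1)
      rw [abs_of_nonneg (hx0 s hs0)]
      exact hbd s ⟨hs0, hs.2.trans hbt⟩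
    set F : ℝ → ℝ := fun u => ∫ s in (0:ℝ)..u, x s with hFdef
    set A : Set ℝ := {s | s ∈ Set.Icc (0:ℝ) t ∧ F s ≤ S0} with hAdef
    have hA0 : (0:ℝ) ∈ A := by
      refine ⟨⟨le_refl 0, ht⟩, ?_⟩
      simp only [hFdef, intervalIntegral.integral_same]
      exact le_of_lt hS0.1
    have hAne : A.Nonempty := ⟨0, hA0⟩
    have hAbdd : BddAbove A := ⟨t, fun s hs => hs.1.2⟩
    set t0 := sSup A with ht0def
    have ht00 : 0 ≤ t0 := le_csSup hAbdd hA0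
    have ht0t : t0 ≤ t := csSup_le hAne (fun s hs => hs.1.2)
    have hzero : ∀ u, t0 < u → u ≤ t → x u = 0 := by
      intro u hu hut
      have hu0 : 0 ≤ u := le_of_lt (lt_of_le_of_lt ht00 hu)
      have hunotA : u ∉ A := fun hmem => absurd (le_csSup hAbdd hmem) (not_le.2 hu)
      have hFu : S0 < F u := by
        by_contra hle
        exact hunotA ⟨⟨hu0, hut⟩, not_lt.1 hle⟩
      have heq := hxe u hu0
      rw [max_eq_right (by linarith : S0 - F u ≤ 0)] at heq
      simpa using heq
    have key : ∀ ε : ℝ, 0 < ε → F t ≤ S0 + (2 * C' + 1) * ε := by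
      intro ε hε
      obtain ⟨s, hsA, hs⟩ := exists_lt_of_lt_csSup hAne (by linarith : t0 - ε < t0)
      have hst0 : s ≤ t0 := le_csSup hAbdd hsA
      have hs0 : 0 ≤ s := hsA.1.1
      set s'' := min t (t0 + ε) with hs''def
      have hs''0 : 0 ≤ s'' := le_min ht (by linarith)
      have hss'' : s ≤ s'' := hst0.trans (le_min ht0t (by linarith))
      have hs''t : s'' ≤ t := min_le_left _ _
      have hs''ub : s'' ≤ t0 + ε := min_le_right _ _
      have hFts'' : F t = F s'' := by
        by_cases hc : s'' = t
        · rw [hc]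
        · have h1 : t0 + ε < t := by
            by_contra hh
            push_neg at hh
            exact hc (min_eq_left hh)
          have hs''eq : s'' = t0 + ε := min_eq_right (le_of_lt h1)
          have hzz : ∫ u in s''..t, x u = 0 := by
            rw [intervalIntegral.integral_congr (g := fun _ => (0:ℝ)) ?_,
              intervalIntegral.integral_zero]
            intro u hu
            rw [Set.uIcc_of_le hs''t] at hu
            exact hzero u (lt_of_lt_of_le (by rw [hs''eq]; linarith) hu.1) hu.2
          have hadd := intervalIntegral.integral_add_adjacent_intervals
            (Ix 0 s'' (le_refl 0) hs''0 hs''t) (Ix s'' t hs''0 hs''t (le_refl t))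
          simp only [hFdef]
          rw [← hadd, hzz, add_zero]
      have hadd2 := intervalIntegral.integral_add_adjacent_intervals
        (Ix 0 s (le_refl 0) hs0 (hss''.trans hs''t)) (Ix s s'' hs0 hss'' hs''t)
      have hmono : ∫ u in s..s'', x u ≤ C' * (s'' - s) := by
        have h := intervalIntegral.integral_mono_on hss''
          (Ix s s'' hs0 hss'' hs''t) (intervalIntegrable_const (c := C'))
          (fun u hu => hbd u ⟨hs0.trans hu.1, hu.2.trans hs''t⟩)
        rw [intervalIntegral.integral_const, smul_eq_mul] at h
        linarith [h]
      have hFs : F s ≤ S0 := hsA.2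
      have hdiff : s'' - s ≤ 2 * ε := by linarith
      have : C' * (s'' - s) ≤ C' * (2 * ε) := mul_le_mul_of_nonneg_left hdiff hC'0
      have hFseq : F s'' = F s + ∫ u in s..s'', x u := by
        simp only [hFdef]; rw [hadd2]
      rw [hFts'', hFseq]
      nlinarith
    have hFt : (∫ s in (0:ℝ)..t, x s) ≤ S0 := by
      refine le_of_forall_pos_le_add (fun δ hδ => ?_)
      have hd : (0:ℝ) < 2 * C' + 1 := by linarith
      have hε : 0 < δ / (2 * C' + 1) := div_pos hδ hd
      have h := key _ hε
      have heq : (2 * C' + 1) * (δ / (2 * C' + 1)) = δ := by field_simp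
      rw [heq] at h
      exact h
    linarith
  intro t ht
  refine ⟨claimF t ht, ?_⟩
  obtain ⟨C, hC⟩ := hxb (t + 1) (by linarith)
  set C' := max C 0 with hC'def
  have hC'0 : 0 ≤ C' := le_max_right _ _
  have hbd : ∀ s ∈ Set.Icc (0:ℝ) t, x s ≤ C' :=
    fun s hs => (hC s ⟨hs.1, by linarith [hs.2]⟩).trans (le_max_left _ _)
  have Ix : IntervalIntegrable x volume 0 t := by
    refine bve_intInt hxm ht (C := C') (fun s hs => ?_)
    rw [abs_of_nonneg (hx0 s (le_of_lt hs.1))]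
    exact hbd s ⟨le_of_lt hs.1, hs.2⟩
  have hker : Measurable fun s => lamb (t - s) * x s :=
    (hl_meas.comp (measurable_const.sub measurable_id)).mul hxm
  have Ik : IntervalIntegrable (fun s => lamb (t - s) * x s) volume 0 t := by
    refine bve_intInt hker ht (C := lamstar * C') (fun s hs => ?_)
    have hts : 0 ≤ t - s := by linarith [hs.2]
    rw [abs_mul, abs_of_nonneg (hl _ hts).1, abs_of_nonneg (hx0 s (le_of_lt hs.1))]
    exact mul_le_mul (hl _ hts).2 (hbd s ⟨le_of_lt hs.1, hs.2⟩)
      (hx0 s (le_of_lt hs.1)) (le_of_lt hlamstar)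
  have hF0 : 0 ≤ ∫ s in (0:ℝ)..t, x s :=
    intervalIntegral.integral_nonneg ht (fun u hu => hx0 u hu.1)
  have hconv0 : 0 ≤ ∫ s in (0:ℝ)..t, lamb (t - s) * x s := by
    refine intervalIntegral.integral_nonneg ht (fun u hu => ?_)
    exact mul_nonneg (hl _ (by linarith [hu.2])).1 (hx0 u hu.1)
  have hconv_le : (∫ s in (0:ℝ)..t, lamb (t - s) * x s) ≤ lamstar * ∫ s in (0:ℝ)..t, x s := by
    have h := intervalIntegral.integral_mono_on ht Ik (Ix.const_mul lamstar)
      (fun u hu => mul_le_mul_of_nonneg_right (hl _ (by linarith [hu.2])).2 (hx0 u hu.1))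
    rwa [intervalIntegral.integral_const_mul] at h
  have hFS := claimF t ht
  have hmax : max (S0 - ∫ s in (0:ℝ)..t, x s) 0 ≤ 1 :=
    max_le (by linarith [hS0.2]) zero_le_one
  have hG : g0 t + (∫ s in (0:ℝ)..t, lamb (t - s) * x s) ≤ lamstar * I0 + lamstar * S0 :=
    add_le_add (hg0 t ht).2
      (hconv_le.trans (mul_le_mul_of_nonneg_left hFS (le_of_lt hlamstar)))
  have hGnn : 0 ≤ g0 t + ∫ s in (0:ℝ)..t, lamb (t - s) * x s :=
    add_nonneg (hg0 t ht).1 hconv0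
  rw [hxe t ht]
  calc max (S0 - ∫ s in (0:ℝ)..t, x s) 0 * (g0 t + ∫ s in (0:ℝ)..t, lamb (t - s) * x s)
      ≤ 1 * (lamstar * I0 + lamstar * S0) := mul_le_mul hmax hG hGnn zero_le_one
    _ = lamstar * (I0 + S0) := by ring

noncomputable def bvePhi (S0 : ℝ) (g0 lamb x : ℝ → ℝ) : ℝ → ℝ := fun t =>
  max (S0 - ∫ s in (0:ℝ)..t, x s) 0 * (g0 t + ∫ s in (0:ℝ)..t, lamb (t - s) * x s)

lemma bvePhi_meas (S0 : ℝ) (g0 lamb x : ℝ → ℝ) (hg0m : Measurable g0)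
    (hlm : Measurable lamb) (hxm : Measurable x) : Measurable (bvePhi S0 g0 lamb x) := by
  unfold bvePhi
  exact ((measurable_const.sub (bve_meas_int (fun p => x p.2)
      (hxm.comp measurable_snd))).max measurable_const).mul
    (hg0m.add (bve_meas_int (fun p => lamb (p.1 - p.2) * x p.2)
      (((hlm.comp (measurable_fst.sub measurable_snd)).mul (hxm.comp measurable_snd)))))

lemma bve_inv
    (lamstar : ℝ) (hlamstar : 0 < lamstar)
    (S0 : ℝ) (hS0 : S0 ∈ Set.Ioc (0:ℝ) 1)
    (I0 : ℝ) (hI0 : I0 ∈ Set.Ioo (0:ℝ) 1)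
    (g0 : ℝ → ℝ) (hg0 : ∀ t, 0 ≤ t → g0 t ∈ Set.Icc 0 (lamstar * I0))
    (lamb : ℝ → ℝ) (hl_meas : Measurable lamb)
    (hl : ∀ t, 0 ≤ t → lamb t ∈ Set.Icc (0:ℝ) lamstar)
    (x : ℝ → ℝ) (hxm : Measurable x)
    (hx : ∀ s, 0 ≤ x s ∧ x s ≤ lamstar * (I0 + S0) * Real.exp (lamstar * max s 0)) :
    ∀ t, 0 ≤ t → 0 ≤ bvePhi S0 g0 lamb x t
      ∧ bvePhi S0 g0 lamb x t ≤ lamstar * (I0 + S0) * Real.exp (lamstar * t) := by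
  intro t ht
  set Lam := lamstar * (I0 + S0) with hLam
  have hLam0 : 0 < Lam := mul_pos hlamstar (by linarith [hI0.1, hS0.1])
  have hMb : ∀ s ∈ Set.Icc (0:ℝ) t, x s ≤ Lam * Real.exp (lamstar * s) := by
    intro s hs
    have := (hx s).2
    rwa [max_eq_left hs.1] at this
  have hMt : ∀ s ∈ Set.Icc (0:ℝ) t, x s ≤ Lam * Real.exp (lamstar * t) := by
    intro s hs
    refine (hMb s hs).trans (mul_le_mul_of_nonneg_left (Real.exp_le_exp.2 ?_) hLam0.le)
    exact mul_le_mul_of_nonneg_left hs.2 hlamstar.le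
  have Ix : IntervalIntegrable x volume 0 t := by
    refine bve_intInt hxm ht (C := Lam * Real.exp (lamstar * t)) (fun s hs => ?_)
    rw [abs_of_nonneg (hx s).1]
    exact hMt s ⟨hs.1.le, hs.2⟩
  have hker : Measurable fun s => lamb (t - s) * x s :=
    (hl_meas.comp (measurable_const.sub measurable_id)).mul hxm
  have Ik : IntervalIntegrable (fun s => lamb (t - s) * x s) volume 0 t := by
    refine bve_intInt hker ht (C := lamstar * (Lam * Real.exp (lamstar * t)))
      (fun s hs => ?_)
    have hts : 0 ≤ t - s := by linarith [hs.2]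
    rw [abs_mul, abs_of_nonneg (hl _ hts).1, abs_of_nonneg (hx s).1]
    exact mul_le_mul (hl _ hts).2 (hMt s ⟨hs.1.le, hs.2⟩) (hx s).1 hlamstar.le
  have hexp : ∫ s in (0:ℝ)..t, lamstar * (Lam * Real.exp (lamstar * s))
      = Lam * (Real.exp (lamstar * t) - 1) := by
    have h1 : lamstar * ∫ s in (0:ℝ)..t, Real.exp (lamstar * s)
        = Real.exp (lamstar * t) - 1 := by
      rw [intervalIntegral.mul_integral_comp_mul_left (f := Real.exp), integral_exp]
      simp
    have h2 : (fun s => lamstar * (Lam * Real.exp (lamstar * s)))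
        = fun s => (lamstar * Lam) * Real.exp (lamstar * s) := by funext s; ring
    rw [h2, intervalIntegral.integral_const_mul]
    rw [mul_comm lamstar Lam, mul_assoc, h1]
  have IM : IntervalIntegrable (fun s => lamstar * (Lam * Real.exp (lamstar * s)))
      volume 0 t :=
    (Continuous.intervalIntegrable (by continuity) 0 t)
  have hconv_le : (∫ s in (0:ℝ)..t, lamb (t - s) * x s)
      ≤ Lam * (Real.exp (lamstar * t) - 1) := by
    rw [← hexp]
    refine intervalIntegral.integral_mono_on ht Ik IM (fun s hs => ?_)
    have hts : 0 ≤ t - s := by linarith [hs.2]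
    exact mul_le_mul (hl _ hts).2
      (hMb s hs |>.trans (by rw [mul_assoc])) (hx s).1 (by positivity)
  have hconv0 : 0 ≤ ∫ s in (0:ℝ)..t, lamb (t - s) * x s :=
    intervalIntegral.integral_nonneg ht
      (fun u hu => mul_nonneg (hl _ (by linarith [hu.2])).1 (hx u).1)
  have hF0 : 0 ≤ ∫ s in (0:ℝ)..t, x s :=
    intervalIntegral.integral_nonneg ht (fun u _ => (hx u).1)
  have hGnn : 0 ≤ g0 t + ∫ s in (0:ℝ)..t, lamb (t - s) * x s :=
    add_nonneg (hg0 t ht).1 hconv0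
  constructor
  · exact mul_nonneg (le_max_right _ _) hGnn
  · have hmax : max (S0 - ∫ s in (0:ℝ)..t, x s) 0 ≤ 1 :=
      max_le (by linarith [hS0.2]) zero_le_one
    have hG : g0 t + (∫ s in (0:ℝ)..t, lamb (t - s) * x s)
        ≤ lamstar * I0 + Lam * (Real.exp (lamstar * t) - 1) :=
      add_le_add (hg0 t ht).2 hconv_le
    have hexp1 : (1:ℝ) ≤ Real.exp (lamstar * t) :=
      Real.one_le_exp (by positivity)
    calc bvePhi S0 g0 lamb x t
        ≤ 1 * (lamstar * I0 + Lam * (Real.exp (lamstar * t) - 1)) :=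
          mul_le_mul hmax hG hGnn zero_le_one
      _ = Lam * Real.exp (lamstar * t) - lamstar * S0 := by rw [hLam]; ring
      _ ≤ Lam * Real.exp (lamstar * t) := by nlinarith [hS0.1]

lemma bve_lip
    (lamstar : ℝ) (hlamstar : 0 < lamstar)
    (S0 : ℝ) (hS0 : S0 ∈ Set.Ioc (0:ℝ) 1)
    (I0 : ℝ) (hI0 : I0 ∈ Set.Ioo (0:ℝ) 1)
    (g0 : ℝ → ℝ) (hg0 : ∀ t, 0 ≤ t → g0 t ∈ Set.Icc 0 (lamstar * I0))
    (lamb : ℝ → ℝ) (hl_meas : Measurable lamb)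
    (hl : ∀ t, 0 ≤ t → lamb t ∈ Set.Icc (0:ℝ) lamstar)
    (t B : ℝ) (ht : 0 ≤ t) (hB : 0 ≤ B)
    (x y : ℝ → ℝ) (hxm : Measurable x) (hym : Measurable y)
    (hx : ∀ s ∈ Set.Icc (0:ℝ) t, 0 ≤ x s ∧ x s ≤ B)
    (hy : ∀ s ∈ Set.Icc (0:ℝ) t, 0 ≤ y s ∧ y s ≤ B) :
    |bvePhi S0 g0 lamb x t - bvePhi S0 g0 lamb y t|
      ≤ (lamstar * I0 + lamstar * B * t + lamstar) * ∫ s in (0:ℝ)..t, |x s - y s| := by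
  have hIoc : ∀ s ∈ Set.Ioc (0:ℝ) t, s ∈ Set.Icc (0:ℝ) t := fun s hs => ⟨hs.1.le, hs.2⟩
  have Ix : IntervalIntegrable x volume 0 t :=
    bve_intInt hxm ht (C := B) (fun s hs => by
      rw [abs_of_nonneg (hx s (hIoc s hs)).1]; exact (hx s (hIoc s hs)).2)
  have Iy : IntervalIntegrable y volume 0 t :=
    bve_intInt hym ht (C := B) (fun s hs => by
      rw [abs_of_nonneg (hy s (hIoc s hs)).1]; exact (hy s (hIoc s hs)).2)
  have hkerx : Measurable fun s => lamb (t - s) * x s :=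
    (hl_meas.comp (measurable_const.sub measurable_id)).mul hxm
  have hkery : Measurable fun s => lamb (t - s) * y s :=
    (hl_meas.comp (measurable_const.sub measurable_id)).mul hym
  have hkb : ∀ (z : ℝ → ℝ), (∀ s ∈ Set.Icc (0:ℝ) t, 0 ≤ z s ∧ z s ≤ B) →
      ∀ s ∈ Set.Ioc (0:ℝ) t, |lamb (t - s) * z s| ≤ lamstar * B := by
    intro z hz s hs
    have hts : 0 ≤ t - s := by linarith [hs.2]
    rw [abs_mul, abs_of_nonneg (hl _ hts).1, abs_of_nonneg (hz s (hIoc s hs)).1]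
    exact mul_le_mul (hl _ hts).2 (hz s (hIoc s hs)).2 (hz s (hIoc s hs)).1 hlamstar.le
  have Ikx : IntervalIntegrable (fun s => lamb (t - s) * x s) volume 0 t :=
    bve_intInt hkerx ht (C := lamstar * B) (hkb x hx)
  have Iky : IntervalIntegrable (fun s => lamb (t - s) * y s) volume 0 t :=
    bve_intInt hkery ht (C := lamstar * B) (hkb y hy)
  have Idiff : IntervalIntegrable (fun s => |x s - y s|) volume 0 t :=
    bve_intInt (hxm.sub hym).abs ht (C := B) (fun s hs => by
      rw [abs_abs]
      exact abs_sub_le_of_nonneg_of_le (hx s (hIoc s hs)).1 (hx s (hIoc s hs)).2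
        (hy s (hIoc s hs)).1 (hy s (hIoc s hs)).2)
  set D := ∫ s in (0:ℝ)..t, |x s - y s| with hD
  have hDnn : 0 ≤ D :=
    intervalIntegral.integral_nonneg ht (fun u _ => abs_nonneg _)
  set Fx := ∫ s in (0:ℝ)..t, x s with hFx
  set Fy := ∫ s in (0:ℝ)..t, y s with hFy
  set Cx := ∫ s in (0:ℝ)..t, lamb (t - s) * x s with hCx
  set Cy := ∫ s in (0:ℝ)..t, lamb (t - s) * y s with hCy
  have hFdiff : |Fx - Fy| ≤ D := by
    rw [hFx, hFy, ← intervalIntegral.integral_sub Ix Iy]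
    exact intervalIntegral.abs_integral_le_integral_abs ht
  have hCdiff : |Cx - Cy| ≤ lamstar * D := by
    rw [hCx, hCy, ← intervalIntegral.integral_sub Ikx Iky]
    have h1 : |∫ s in (0:ℝ)..t, (lamb (t - s) * x s - lamb (t - s) * y s)|
        ≤ ∫ s in (0:ℝ)..t, |lamb (t - s) * x s - lamb (t - s) * y s| :=
      intervalIntegral.abs_integral_le_integral_abs ht
    refine h1.trans ?_
    have h2 : (∫ s in (0:ℝ)..t, |lamb (t - s) * x s - lamb (t - s) * y s|)
        ≤ ∫ s in (0:ℝ)..t, lamstar * |x s - y s| := by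
      refine intervalIntegral.integral_mono_on ht
        (bve_intInt (hkerx.sub hkery).abs ht (C := 2 * (lamstar * B)) (fun s hs => by
          rw [abs_abs]
          calc |lamb (t - s) * x s - lamb (t - s) * y s|
              ≤ |lamb (t - s) * x s| + |lamb (t - s) * y s| := abs_sub _ _
            _ ≤ lamstar * B + lamstar * B := add_le_add (hkb x hx s hs) (hkb y hy s hs)
            _ = 2 * (lamstar * B) := by ring))
        (Idiff.const_mul lamstar) (fun s hs => ?_)
      have hts : 0 ≤ t - s := by linarith [hs.2]
      rw [← mul_sub, abs_mul, abs_of_nonneg (hl _ hts).1]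
      exact mul_le_mul_of_nonneg_right (hl _ hts).2 (abs_nonneg _)
    refine h2.trans ?_
    rw [intervalIntegral.integral_const_mul]
  have hCx_bd : Cx ≤ lamstar * B * t := by
    have h := intervalIntegral.integral_mono_on ht Ikx
      (intervalIntegrable_const (c := lamstar * B))
      (fun s hs => by
        have hts : 0 ≤ t - s := by linarith [hs.2]
        exact mul_le_mul (hl _ hts).2 (hx s hs).2 (hx s hs).1 hlamstar.le)
    rw [intervalIntegral.integral_const, smul_eq_mul] at h
    calc Cx ≤ (t - 0) * (lamstar * B) := h
      _ = lamstar * B * t := by ring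
  have hCx0 : 0 ≤ Cx :=
    intervalIntegral.integral_nonneg ht
      (fun u hu => mul_nonneg (hl _ (by linarith [hu.2])).1 (hx u hu).1)
  have hFy0 : 0 ≤ Fy :=
    intervalIntegral.integral_nonneg ht (fun u hu => (hy u hu).1)
  have hGx_bd : g0 t + Cx ≤ lamstar * I0 + lamstar * B * t :=
    add_le_add (hg0 t ht).2 hCx_bd
  have hGx0 : 0 ≤ g0 t + Cx := add_nonneg (hg0 t ht).1 hCx0
  have hPy1 : |max (S0 - Fy) 0| ≤ 1 := by
    rw [abs_of_nonneg (le_max_right _ _)]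
    exact max_le (by linarith [hS0.2]) zero_le_one
  have hPdiff : |max (S0 - Fx) 0 - max (S0 - Fy) 0| ≤ D := by
    refine (abs_max_sub_max_le_abs _ _ _).trans ?_
    have : S0 - Fx - (S0 - Fy) = -(Fx - Fy) := by ring
    rw [this, abs_neg]
    exact hFdiff
  have key : bvePhi S0 g0 lamb x t - bvePhi S0 g0 lamb y t
      = (max (S0 - Fx) 0 - max (S0 - Fy) 0) * (g0 t + Cx)
        + max (S0 - Fy) 0 * (Cx - Cy) := by
    unfold bvePhi
    rw [← hFx, ← hFy, ← hCx, ← hCy]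
    ring
  rw [key]
  calc |(max (S0 - Fx) 0 - max (S0 - Fy) 0) * (g0 t + Cx) + max (S0 - Fy) 0 * (Cx - Cy)|
      ≤ |(max (S0 - Fx) 0 - max (S0 - Fy) 0) * (g0 t + Cx)|
        + |max (S0 - Fy) 0 * (Cx - Cy)| := abs_add_le _ _
    _ = |max (S0 - Fx) 0 - max (S0 - Fy) 0| * |g0 t + Cx|
        + |max (S0 - Fy) 0| * |Cx - Cy| := by rw [abs_mul, abs_mul]
    _ ≤ D * (lamstar * I0 + lamstar * B * t) + 1 * (lamstar * D) := by
        refine add_le_add (mul_le_mul hPdiff ?_ (abs_nonneg _) hDnn)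
          (mul_le_mul hPy1 hCdiff (abs_nonneg _) zero_le_one)
        rw [abs_of_nonneg hGx0]; exact hGx_bd
    _ = (lamstar * I0 + lamstar * B * t + lamstar) * D := by ring

noncomputable def bveX (S0 : ℝ) (g0 lamb : ℝ → ℝ) : ℕ → ℝ → ℝ
  | 0 => fun _ => 0
  | (n+1) => fun t => if t < 0 then 0 else bvePhi S0 g0 lamb (bveX S0 g0 lamb n) t

set_option maxHeartbeats 1000000 in
lemma bve_exists
    (lamstar : ℝ) (hlamstar : 0 < lamstar)
    (S0 : ℝ) (hS0 : S0 ∈ Set.Ioc (0:ℝ) 1)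
    (I0 : ℝ) (hI0 : I0 ∈ Set.Ioo (0:ℝ) 1)
    (g0 : ℝ → ℝ) (hg0_meas : Measurable g0)
    (hg0 : ∀ t, 0 ≤ t → g0 t ∈ Set.Icc 0 (lamstar * I0))
    (lamb : ℝ → ℝ) (hl_meas : Measurable lamb)
    (hl : ∀ t, 0 ≤ t → lamb t ∈ Set.Icc (0:ℝ) lamstar) :
    ∃ x : ℝ → ℝ, Measurable x
      ∧ (∀ t, 0 ≤ x t ∧ x t ≤ lamstar * (I0 + S0) * Real.exp (lamstar * max t 0))
      ∧ (∀ t, 0 ≤ t → x t = bvePhi S0 g0 lamb x t) := by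
  classical
  set Lam := lamstar * (I0 + S0) with hLamdef
  have hLam0 : 0 < Lam := mul_pos hlamstar (by linarith [hI0.1, hS0.1])
  set X : ℕ → ℝ → ℝ := bveX S0 g0 lamb with hXdef
  have hX0 : X 0 = fun _ => (0:ℝ) := rfl
  have hXs : ∀ n, X (n+1) = fun t => if t < 0 then 0 else bvePhi S0 g0 lamb (X n) t :=
    fun n => rfl
  have hmeas : ∀ n, Measurable (X n) := by
    intro n
    induction n with
    | zero => exact measurable_const
    | succ n ih =>
      rw [hXs n]
      exact Measurable.ite (measurableSet_lt measurable_id measurable_const)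
        measurable_const (bvePhi_meas S0 g0 lamb (X n) hg0_meas hl_meas ih)
  have hbnd : ∀ n, ∀ t, 0 ≤ X n t ∧ X n t ≤ Lam * Real.exp (lamstar * max t 0) := by
    intro n
    induction n with
    | zero => intro t; rw [hX0]; exact ⟨le_refl 0, by positivity⟩
    | succ n ih =>
      intro t
      rw [hXs n]
      by_cases ht : t < 0
      · simp only [if_pos ht]
        exact ⟨le_refl 0, by positivity⟩
      · push_neg at ht
        simp only [if_neg (not_lt.2 ht)]
        have := bve_inv lamstar hlamstar S0 hS0 I0 hI0 g0 hg0 lamb hl_meas hl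
          (X n) (hmeas n) ih t ht
        rw [max_eq_left ht]
        exact this
  -- difference estimates on [0, t]
  have claim : ∀ t : ℝ, 0 ≤ t →
      ∀ n : ℕ, ∀ s ∈ Set.Icc (0:ℝ) t,
      |X (n+1) s - X n s| ≤ (Lam * Real.exp (lamstar * t)) *
        ((lamstar * I0 + lamstar * (Lam * Real.exp (lamstar * t)) * t + lamstar) ^ n
          * s ^ n / n.factorial) := by
    intro t ht
    set Mt := Lam * Real.exp (lamstar * t) with hMtdef
    have hMt0 : 0 < Mt := by positivity
    set K := lamstar * I0 + lamstar * Mt * t + lamstar with hKdef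
    have hK0 : 0 < K := by
      have h1 : 0 < lamstar * I0 := mul_pos hlamstar hI0.1
      have h2 : 0 ≤ lamstar * Mt * t := mul_nonneg (mul_nonneg hlamstar.le hMt0.le) ht
      rw [hKdef]; linarith
    have envel : ∀ n, ∀ s ∈ Set.Icc (0:ℝ) t, 0 ≤ X n s ∧ X n s ≤ Mt := by
      intro n s hs
      refine ⟨(hbnd n s).1, (hbnd n s).2.trans ?_⟩
      rw [max_eq_left hs.1, hMtdef]
      exact mul_le_mul_of_nonneg_left
        (Real.exp_le_exp.2 (mul_le_mul_of_nonneg_left hs.2 hlamstar.le)) hLam0.le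
    intro n
    induction n with
    | zero =>
      intro s hs
      simp only [pow_zero, Nat.factorial_zero, Nat.cast_one, one_mul, mul_one, div_one]
      rw [hX0]
      simp only [sub_zero]
      rw [abs_of_nonneg (hbnd (0+1) s).1]
      exact (envel (0+1) s hs).2
    | succ n ih =>
      intro s hs
      have hs0 : 0 ≤ s := hs.1
      have hst : s ≤ t := hs.2
      have hrw1 : X (n+1+1) s = bvePhi S0 g0 lamb (X (n+1)) s := by
        rw [hXs (n+1)]; simp only [if_neg (not_lt.2 hs0)]
      have hrw2 : X (n+1) s = bvePhi S0 g0 lamb (X n) s := by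
        rw [hXs n]; simp only [if_neg (not_lt.2 hs0)]
      rw [hrw1, hrw2]
      have hIccsub : ∀ u ∈ Set.Icc (0:ℝ) s, u ∈ Set.Icc (0:ℝ) t :=
        fun u hu => ⟨hu.1, hu.2.trans hst⟩
      have hlip := bve_lip lamstar hlamstar S0 hS0 I0 hI0 g0 hg0 lamb hl_meas hl
        s Mt hs0 hMt0.le (X (n+1)) (X n) (hmeas (n+1)) (hmeas n)
        (fun u hu => envel (n+1) u (hIccsub u hu))
        (fun u hu => envel n u (hIccsub u hu))
      refine hlip.trans ?_
      have hKs : lamstar * I0 + lamstar * Mt * s + lamstar ≤ K := by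
        rw [hKdef]
        have : lamstar * Mt * s ≤ lamstar * Mt * t :=
          mul_le_mul_of_nonneg_left hst (by positivity)
        linarith
      have hDnn : 0 ≤ ∫ u in (0:ℝ)..s, |X (n+1) u - X n u| :=
        intervalIntegral.integral_nonneg hs0 (fun u _ => abs_nonneg _)
      have hintle : (∫ u in (0:ℝ)..s, |X (n+1) u - X n u|)
          ≤ Mt * K ^ n / n.factorial * (s ^ (n+1) / (n+1)) := by
        have hIdiff : IntervalIntegrable (fun u => |X (n+1) u - X n u|) volume 0 s := by
          refine bve_intInt ((hmeas (n+1)).sub (hmeas n)).abs hs0 (C := 2 * Mt)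
            (fun u hu => ?_)
          have hu' : u ∈ Set.Icc (0:ℝ) t := ⟨hu.1.le, hu.2.trans hst⟩
          rw [abs_abs]
          calc |X (n+1) u - X n u| ≤ |X (n+1) u| + |X n u| := abs_sub _ _
            _ ≤ Mt + Mt := add_le_add
                (by rw [abs_of_nonneg (envel (n+1) u hu').1]; exact (envel (n+1) u hu').2)
                (by rw [abs_of_nonneg (envel n u hu').1]; exact (envel n u hu').2)
            _ = 2 * Mt := by ring
        have hcont : Continuous (fun u : ℝ => Mt * (K ^ n * u ^ n / n.factorial)) := by
          continuity
        have hmono := intervalIntegral.integral_mono_on hs0 hIdiff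
          (hcont.intervalIntegrable 0 s)
          (fun u hu => ih u (hIccsub u hu))
        refine hmono.trans ?_
        have hfn : (fun u : ℝ => Mt * (K ^ n * u ^ n / n.factorial))
            = fun u : ℝ => (Mt * K ^ n / n.factorial) * u ^ n := by
          funext u; ring
        rw [hfn, intervalIntegral.integral_const_mul, integral_pow,
          zero_pow (Nat.succ_ne_zero n), sub_zero]
      calc (lamstar * I0 + lamstar * Mt * s + lamstar)
            * ∫ u in (0:ℝ)..s, |X (n+1) u - X n u|
          ≤ K * (Mt * K ^ n / n.factorial * (s ^ (n+1) / (n+1))) := by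
            exact mul_le_mul hKs hintle hDnn hK0.le
        _ = Mt * (K ^ (n+1) * s ^ (n+1) / (n+1).factorial) := by
            have hfac : (((n+1).factorial : ℕ) : ℝ) = (↑n + 1) * ↑n.factorial := by
              rw [Nat.factorial_succ]; push_cast; ring
            rw [hfac]
            have hn0 : ((n.factorial : ℕ) : ℝ) ≠ 0 := Nat.cast_ne_zero.2 n.factorial_ne_zero
            have hn1 : (↑n + 1 : ℝ) ≠ 0 := by positivity
            field_simp
            ring
  -- Cauchy sequence and limit
  have hcauchy : ∀ t : ℝ, CauchySeq (fun n => X n t) := by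
    intro t
    by_cases ht : 0 ≤ t
    · set Mt := Lam * Real.exp (lamstar * t) with hMtdef
      set K := lamstar * I0 + lamstar * Mt * t + lamstar with hKdef
      refine cauchySeq_of_summable_dist ?_
      refine Summable.of_nonneg_of_le (fun n => dist_nonneg)
        (fun n => ?_) ((Real.summable_pow_div_factorial (K * t)).mul_left Mt)
      rw [Real.dist_eq, abs_sub_comm]
      have := claim t ht n t ⟨ht, le_refl t⟩
      rw [mul_pow]
      exact this
    · have : (fun n => X n t) = fun _ => (0:ℝ) := by
        funext n
        cases n with
        | zero => rw [hX0]
        | succ n => rw [hXs n]; simp only [if_pos (not_le.1 ht)]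
      rw [this]
      exact tendsto_const_nhds.cauchySeq
  set xbar : ℝ → ℝ := fun t => limUnder atTop (fun n => X n t) with hxbardef
  have htendsto : ∀ t, Tendsto (fun n => X n t) atTop (𝓝 (xbar t)) :=
    fun t => (hcauchy t).tendsto_limUnder
  have hxbar_meas : Measurable xbar :=
    measurable_of_tendsto_metrizable (fun n => hmeas n) (tendsto_pi_nhds.2 htendsto)
  have hxbar_bnd : ∀ t, 0 ≤ xbar t ∧ xbar t ≤ Lam * Real.exp (lamstar * max t 0) := by
    intro t
    constructor
    · exact ge_of_tendsto (htendsto t) (Filter.Eventually.of_forall (fun n => (hbnd n t).1))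
    · exact le_of_tendsto (htendsto t) (Filter.Eventually.of_forall (fun n => (hbnd n t).2))
  refine ⟨xbar, hxbar_meas, hxbar_bnd, ?_⟩
  intro t ht
  set Mt := Lam * Real.exp (lamstar * t) with hMtdef
  have henv : ∀ n, ∀ s ∈ Set.Ioc (0:ℝ) t, |X n s| ≤ Mt := by
    intro n s hs
    rw [abs_of_nonneg (hbnd n s).1]
    refine (hbnd n s).2.trans ?_
    rw [max_eq_left hs.1.le, hMtdef]
    exact mul_le_mul_of_nonneg_left
      (Real.exp_le_exp.2 (mul_le_mul_of_nonneg_left hs.2 hlamstar.le)) hLam0.le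
  have h1 : Tendsto (fun n => ∫ s in (0:ℝ)..t, X n s) atTop
      (𝓝 (∫ s in (0:ℝ)..t, xbar s)) := by
    refine intervalIntegral.tendsto_integral_filter_of_dominated_convergence
      (fun _ => Mt)
      (Filter.Eventually.of_forall (fun n => ((hmeas n).aestronglyMeasurable.restrict)))
      (Filter.Eventually.of_forall (fun n => ?_)) intervalIntegrable_const
      (ae_of_all _ (fun s _ => htendsto s))
    rw [uIoc_of_le ht]
    refine ae_of_all _ (fun s hs => ?_)
    rw [Real.norm_eq_abs]
    exact henv n s hs
  have h2 : Tendsto (fun n => ∫ s in (0:ℝ)..t, lamb (t - s) * X n s) atTop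
      (𝓝 (∫ s in (0:ℝ)..t, lamb (t - s) * xbar s)) := by
    refine intervalIntegral.tendsto_integral_filter_of_dominated_convergence
      (fun _ => lamstar * Mt)
      (Filter.Eventually.of_forall (fun n =>
        (((hl_meas.comp (measurable_const.sub measurable_id)).mul
          (hmeas n)).aestronglyMeasurable.restrict)))
      (Filter.Eventually.of_forall (fun n => ?_)) intervalIntegrable_const
      (ae_of_all _ (fun s _ => ((htendsto s).const_mul (lamb (t - s)))))
    rw [uIoc_of_le ht]
    refine ae_of_all _ (fun s hs => ?_)
    rw [Real.norm_eq_abs, abs_mul]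
    have hts : 0 ≤ t - s := by linarith [hs.2]
    refine mul_le_mul ?_ (henv n s hs) (abs_nonneg _) hlamstar.le
    rw [abs_of_nonneg (hl _ hts).1]
    exact (hl _ hts).2
  have htphi : Tendsto (fun n => bvePhi S0 g0 lamb (X n) t) atTop
      (𝓝 (bvePhi S0 g0 lamb xbar t)) := by
    unfold bvePhi
    exact ((tendsto_const_nhds.sub h1).max tendsto_const_nhds).mul
      (tendsto_const_nhds.add h2)
  have hseq : (fun n => X (n+1) t) = fun n => bvePhi S0 g0 lamb (X n) t := by
    funext n
    rw [hXs n]; simp only [if_neg (not_lt.2 ht)]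
  have htX : Tendsto (fun n => X (n+1) t) atTop (𝓝 (xbar t)) :=
    (htendsto t).comp (tendsto_add_atTop_nat 1)
  exact tendsto_nhds_unique htX (hseq ▸ htphi)

set_option maxHeartbeats 1000000 in
lemma bve_unique
    (lamstar : ℝ) (hlamstar : 0 < lamstar)
    (S0 : ℝ) (hS0 : S0 ∈ Set.Ioc (0:ℝ) 1)
    (I0 : ℝ) (hI0 : I0 ∈ Set.Ioo (0:ℝ) 1)
    (g0 : ℝ → ℝ) (hg0_meas : Measurable g0)
    (hg0 : ∀ t, 0 ≤ t → g0 t ∈ Set.Icc 0 (lamstar * I0))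
    (lamb : ℝ → ℝ) (hl_meas : Measurable lamb)
    (hl : ∀ t, 0 ≤ t → lamb t ∈ Set.Icc (0:ℝ) lamstar)
    (x₁ x₂ : ℝ → ℝ)
    (h1m : Measurable x₁) (h2m : Measurable x₂)
    (h10 : ∀ t, 0 ≤ t → 0 ≤ x₁ t) (h20 : ∀ t, 0 ≤ t → 0 ≤ x₂ t)
    (h1b : ∀ T, 0 < T → ∃ C, ∀ t ∈ Set.Icc (0:ℝ) T, x₁ t ≤ C)
    (h2b : ∀ T, 0 < T → ∃ C, ∀ t ∈ Set.Icc (0:ℝ) T, x₂ t ≤ C)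
    (h1e : ∀ t, 0 ≤ t → x₁ t = max (S0 - ∫ s in (0:ℝ)..t, x₁ s) 0
        * (g0 t + ∫ s in (0:ℝ)..t, lamb (t - s) * x₁ s))
    (h2e : ∀ t, 0 ≤ t → x₂ t = max (S0 - ∫ s in (0:ℝ)..t, x₂ s) 0
        * (g0 t + ∫ s in (0:ℝ)..t, lamb (t - s) * x₂ s)) :
    ∀ t, 0 ≤ t → x₁ t = x₂ t := by
  have ap1 := bve_apriori lamstar hlamstar S0 hS0 I0 hI0 g0 hg0 lamb hl_meas hl
    x₁ h1m h10 h1b h1e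
  have ap2 := bve_apriori lamstar hlamstar S0 hS0 I0 hI0 g0 hg0 lamb hl_meas hl
    x₂ h2m h20 h2b h2e
  set Lam := lamstar * (I0 + S0) with hLamdef
  have hLam0 : 0 < Lam := mul_pos hlamstar (by linarith [hI0.1, hS0.1])
  intro t ht
  set K := lamstar * I0 + lamstar * Lam * t + lamstar with hKdef
  have hK0 : 0 < K := by
    have h1 : 0 < lamstar * I0 := mul_pos hlamstar hI0.1
    have h2 : 0 ≤ lamstar * Lam * t := mul_nonneg (mul_nonneg hlamstar.le hLam0.le) ht
    rw [hKdef]; linarith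
  have claim : ∀ n : ℕ, ∀ s ∈ Set.Icc (0:ℝ) t,
      |x₁ s - x₂ s| ≤ 2 * Lam * (K ^ n * s ^ n / n.factorial) := by
    intro n
    induction n with
    | zero =>
      intro s hs
      simp only [pow_zero, Nat.factorial_zero, Nat.cast_one, one_mul, mul_one, div_one]
      calc |x₁ s - x₂ s| ≤ |x₁ s| + |x₂ s| := abs_sub _ _
        _ ≤ Lam + Lam := add_le_add
            (by rw [abs_of_nonneg (h10 s hs.1)]; exact (ap1 s hs.1).2)
            (by rw [abs_of_nonneg (h20 s hs.1)]; exact (ap2 s hs.1).2)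
        _ = 2 * Lam := by ring
    | succ n ih =>
      intro s hs
      have hs0 : 0 ≤ s := hs.1
      have hst : s ≤ t := hs.2
      have hrw1 : x₁ s = bvePhi S0 g0 lamb x₁ s := h1e s hs0
      have hrw2 : x₂ s = bvePhi S0 g0 lamb x₂ s := h2e s hs0
      rw [hrw1, hrw2]
      have hlip := bve_lip lamstar hlamstar S0 hS0 I0 hI0 g0 hg0 lamb hl_meas hl
        s Lam hs0 hLam0.le x₁ x₂ h1m h2m
        (fun u hu => ⟨h10 u hu.1, (ap1 u hu.1).2⟩)
        (fun u hu => ⟨h20 u hu.1, (ap2 u hu.1).2⟩)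
      refine hlip.trans ?_
      have hKs : lamstar * I0 + lamstar * Lam * s + lamstar ≤ K := by
        rw [hKdef]
        have : lamstar * Lam * s ≤ lamstar * Lam * t :=
          mul_le_mul_of_nonneg_left hst (by positivity)
        linarith
      have hDnn : 0 ≤ ∫ u in (0:ℝ)..s, |x₁ u - x₂ u| :=
        intervalIntegral.integral_nonneg hs0 (fun u _ => abs_nonneg _)
      have hintle : (∫ u in (0:ℝ)..s, |x₁ u - x₂ u|)
          ≤ 2 * Lam * K ^ n / n.factorial * (s ^ (n+1) / (n+1)) := by
        have hIdiff : IntervalIntegrable (fun u => |x₁ u - x₂ u|) volume 0 s := by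
          refine bve_intInt (h1m.sub h2m).abs hs0 (C := 2 * Lam) (fun u hu => ?_)
          rw [abs_abs]
          calc |x₁ u - x₂ u| ≤ |x₁ u| + |x₂ u| := abs_sub _ _
            _ ≤ Lam + Lam := add_le_add
                (by rw [abs_of_nonneg (h10 u hu.1.le)]; exact (ap1 u hu.1.le).2)
                (by rw [abs_of_nonneg (h20 u hu.1.le)]; exact (ap2 u hu.1.le).2)
            _ = 2 * Lam := by ring
        have hcont : Continuous (fun u : ℝ => 2 * Lam * (K ^ n * u ^ n / n.factorial)) := by
          continuity
        have hmono := intervalIntegral.integral_mono_on hs0 hIdiff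
          (hcont.intervalIntegrable 0 s)
          (fun u hu => ih u ⟨hu.1, hu.2.trans hst⟩)
        refine hmono.trans ?_
        have hfn : (fun u : ℝ => 2 * Lam * (K ^ n * u ^ n / n.factorial))
            = fun u : ℝ => (2 * Lam * K ^ n / n.factorial) * u ^ n := by
          funext u; ring
        rw [hfn, intervalIntegral.integral_const_mul, integral_pow,
          zero_pow (Nat.succ_ne_zero n), sub_zero]
      calc (lamstar * I0 + lamstar * Lam * s + lamstar)
            * ∫ u in (0:ℝ)..s, |x₁ u - x₂ u|
          ≤ K * (2 * Lam * K ^ n / n.factorial * (s ^ (n+1) / (n+1))) :=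
            mul_le_mul hKs hintle hDnn hK0.le
        _ = 2 * Lam * (K ^ (n+1) * s ^ (n+1) / (n+1).factorial) := by
            have hfac : (((n+1).factorial : ℕ) : ℝ) = (↑n + 1) * ↑n.factorial := by
              rw [Nat.factorial_succ]; push_cast; ring
            rw [hfac]
            have hn0 : ((n.factorial : ℕ) : ℝ) ≠ 0 := Nat.cast_ne_zero.2 n.factorial_ne_zero
            have hn1 : (↑n + 1 : ℝ) ≠ 0 := by positivity
            field_simp
            ring
  have htend : Tendsto (fun n : ℕ => 2 * Lam * ((K * t) ^ n / n.factorial)) atTop (𝓝 0) := by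
    have := (Real.summable_pow_div_factorial (K * t)).tendsto_atTop_zero
    have h2 := this.const_mul (2 * Lam)
    simpa using h2
  have hle : |x₁ t - x₂ t| ≤ 0 := by
    refine ge_of_tendsto htend (Filter.Eventually.of_forall (fun n => ?_))
    have := claim n t ⟨ht, le_refl t⟩
    rw [mul_pow]
    exact this
  have : x₁ t - x₂ t = 0 := abs_eq_zero.1 (le_antisymm hle (abs_nonneg _))
  linarith

end BVEhelpers

open MeasureTheory

/-- The boundary Volterra equation
`x(t) = (S̄(0) - ∫₀ᵗ x)⁺ ⋅ (g₀(t) + ∫₀ᵗ λ̄(t-s)x(s) ds)` has a unique nonnegative locally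
bounded solution, and any solution satisfies `∫₀ᵗ x ≤ S̄(0)` and
`x(t) ≤ λ*(Ī(0)+S̄(0)) e^{λ* t}`. -/
theorem boundary_volterra_equation
    (lamstar : ℝ) (hlamstar : 0 < lamstar)
    (S0 : ℝ) (hS0 : S0 ∈ Set.Ioc (0:ℝ) 1)
    (I0 : ℝ) (hI0 : I0 ∈ Set.Ioo (0:ℝ) 1)
    (g0 : ℝ → ℝ) (hg0_meas : Measurable g0)
    (hg0 : ∀ t, 0 ≤ t → g0 t ∈ Set.Icc 0 (lamstar * I0))
    (lamb : ℝ → ℝ) (hl_meas : Measurable lamb)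
    (hl : ∀ t, 0 ≤ t → lamb t ∈ Set.Icc (0:ℝ) lamstar) :
    (∃ x : ℝ → ℝ, Measurable x
      ∧ (∀ t, 0 ≤ t → 0 ≤ x t)
      ∧ (∀ T, 0 < T → ∃ C, ∀ t ∈ Set.Icc (0:ℝ) T, x t ≤ C)
      ∧ (∀ t, 0 ≤ t →
          x t = max (S0 - ∫ s in (0:ℝ)..t, x s) 0
              * (g0 t + ∫ s in (0:ℝ)..t, lamb (t - s) * x s)))
    ∧ (∀ x₁ x₂ : ℝ → ℝ,
        Measurable x₁ → Measurable x₂ →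
        (∀ t, 0 ≤ t → 0 ≤ x₁ t) → (∀ t, 0 ≤ t → 0 ≤ x₂ t) →
        (∀ T, 0 < T → ∃ C, ∀ t ∈ Set.Icc (0:ℝ) T, x₁ t ≤ C) →
        (∀ T, 0 < T → ∃ C, ∀ t ∈ Set.Icc (0:ℝ) T, x₂ t ≤ C) →
        (∀ t, 0 ≤ t → x₁ t = max (S0 - ∫ s in (0:ℝ)..t, x₁ s) 0
              * (g0 t + ∫ s in (0:ℝ)..t, lamb (t - s) * x₁ s)) →
        (∀ t, 0 ≤ t → x₂ t = max (S0 - ∫ s in (0:ℝ)..t, x₂ s) 0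
              * (g0 t + ∫ s in (0:ℝ)..t, lamb (t - s) * x₂ s)) →
        ∀ t, 0 ≤ t → x₁ t = x₂ t)
    ∧ (∀ x : ℝ → ℝ, Measurable x →
        (∀ t, 0 ≤ t → 0 ≤ x t) →
        (∀ T, 0 < T → ∃ C, ∀ t ∈ Set.Icc (0:ℝ) T, x t ≤ C) →
        (∀ t, 0 ≤ t → x t = max (S0 - ∫ s in (0:ℝ)..t, x s) 0
              * (g0 t + ∫ s in (0:ℝ)..t, lamb (t - s) * x s)) →
        ∀ t, 0 ≤ t →
          (∫ s in (0:ℝ)..t, x s) ≤ S0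
          ∧ x t ≤ lamstar * (I0 + S0) * Real.exp (lamstar * t)) := by
  have hLam0 : 0 < lamstar * (I0 + S0) := mul_pos hlamstar (by linarith [hI0.1, hS0.1])
  refine ⟨?_, ?_, ?_⟩
  · obtain ⟨x, hxm, hxb, hxe⟩ := bve_exists lamstar hlamstar S0 hS0 I0 hI0 g0 hg0_meas
      hg0 lamb hl_meas hl
    refine ⟨x, hxm, fun t _ => (hxb t).1, fun T hT => ⟨lamstar * (I0 + S0)
      * Real.exp (lamstar * T), fun t htT => ?_⟩, fun t ht => hxe t ht⟩
    refine (hxb t).2.trans ?_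
    rw [max_eq_left htT.1]
    exact mul_le_mul_of_nonneg_left
      (Real.exp_le_exp.2 (mul_le_mul_of_nonneg_left htT.2 hlamstar.le)) hLam0.le
  · intro x₁ x₂ h1m h2m h10 h20 h1b h2b h1e h2e
    exact bve_unique lamstar hlamstar S0 hS0 I0 hI0 g0 hg0_meas hg0 lamb hl_meas hl
      x₁ x₂ h1m h2m h10 h20 h1b h2b h1e h2e
  · intro x hxm hx0 hxb hxe t ht
    have h := bve_apriori lamstar hlamstar S0 hS0 I0 hI0 g0 hg0 lamb hl_meas hl
      x hxm hx0 hxb hxe t ht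
    refine ⟨h.1, h.2.trans ?_⟩
    exact le_mul_of_one_le_right hLam0.le (Real.one_le_exp (by positivity))
end
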